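/- The system TC_SCI+(UB) is sound, complete, and terminating: (i) if an SCI-formula φ is SCI-satisfiable then there is an open fully expanded TC_SCI+(UB)-tableau with w⁺ : φ at the root; (ii) if φ is SCI-valid then φ has a TC_SCI+(UB)-tableau proof; (iii) for every φ, on any branch of a TC_SCI+(UB)-tableau for φ, rules are applied at most |φ| + |φ|² + 1 times, where |φ| is the number of occurrences of subformulas of φ. -/

import Mathlib

/-- SCI-formulas: atoms, negation, implication, and the identity connective. -/
inductive SCIForm : Type
  | atom : ℕ → SCIForm
  | not : SCIForm → SCIForm
  | imp : SCIForm → SCIForm → SCIForm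
  | idn : SCIForm → SCIForm → SCIForm
  deriving DecidableEq

/-- An SCI-structure over a carrier type `U`: a set of designated values and
operations interpreting ¬, →, ≡. -/
structure SCIStruct (U : Type) where
  D : Set U
  neg : U → U
  imp : U → U → U
  idn : U → U → U

/-- `M` is an SCI-model: `U` is non-empty, `D` is a proper subset of `U`, and the
three semantic conditions hold. -/
def IsSCIModel {U : Type} (M : SCIStruct U) : Prop :=
  Nonempty U ∧ M.D ≠ Set.univ ∧
  (∀ a : U, M.neg a ∈ M.D ↔ a ∉ M.D) ∧
  (∀ a b : U, M.imp a b ∈ M.D ↔ (a ∉ M.D ∨ b ∈ M.D)) ∧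
  (∀ a b : U, M.idn a b ∈ M.D ↔ a = b)

/-- A valuation in an SCI-structure: a homomorphism from formulas to `U`. -/
def IsValuation {U : Type} (M : SCIStruct U) (V : SCIForm → U) : Prop :=
  (∀ φ, V (SCIForm.not φ) = M.neg (V φ)) ∧
  (∀ φ ψ, V (SCIForm.imp φ ψ) = M.imp (V φ) (V ψ)) ∧
  (∀ φ ψ, V (SCIForm.idn φ ψ) = M.idn (V φ) (V ψ))

/-- A formula is SCI-satisfiable if its denotation is designated in some
SCI-model under some valuation. -/
def SCISatisfiable (φ : SCIForm) : Prop :=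
  ∃ (U : Type) (M : SCIStruct U) (V : SCIForm → U),
    IsSCIModel M ∧ IsValuation M V ∧ V φ ∈ M.D

/-- A formula is SCI-valid if its denotation is designated in every SCI-model
under every valuation. -/
def SCIValid (φ : SCIForm) : Prop :=
  ∀ (U : Type) (M : SCIStruct U) (V : SCIForm → U),
    IsSCIModel M → IsValuation M V → V φ ∈ M.D

/-- Labels: a Boolean polarity (`true` = the set L⁺, `false` = the set L⁻)
together with a natural number index; L⁺ and L⁻ are disjoint and countably
infinite. -/
abbrev Label : Type := Bool × ℕ

/-- `w` belongs to L⁺. -/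
def posL (w : Label) : Prop := w.1 = true

/-- `w` belongs to L⁻. -/
def negL (w : Label) : Prop := w.1 = false

/-- Expressions occurring on tableau branches: labelled formulas `w : φ`,
equalities `w = v`, inequalities `w ≠ v`, and the closure symbol ⊥. -/
inductive Node : Type
  | lf : Label → SCIForm → Node
  | eq : Label → Label → Node
  | neq : Label → Label → Node
  | bot : Node
  deriving DecidableEq

/-- `|φ|`: the number of occurrences of subformulas of `φ`. -/
def SCIForm.size : SCIForm → ℕ
  | SCIForm.atom _ => 1
  | SCIForm.not φ => SCIForm.size φ + 1
  | SCIForm.imp φ ψ => SCIForm.size φ + SCIForm.size ψ + 1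
  | SCIForm.idn φ ψ => SCIForm.size φ + SCIForm.size ψ + 1

/-- A label is fresh on a branch: no labelled formula on the branch carries it. -/
def freshL (v : Label) (l : List Node) : Prop := ∀ φ, Node.lf v φ ∉ l

/-- One application of a TC_SCI rule extending a single branch.  A branch is a
list of nodes (in order of introduction, root first) together with the set `E`
of labelled formulas to which a decomposition rule has already been applied
(each decomposition rule may be applied only once to a given labelled formula,
each equality rule only if its conclusion is not yet on the branch, and no rule
is applied to a closed branch). -/
inductive Extend : List Node → Set (Label × SCIForm) → List Node → Set (Label × SCIForm) → Prop
  | negP (l : List Node) (E : Set (Label × SCIForm)) (w v : Label) (φ : SCIForm) :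
      Node.bot ∉ l → posL w → Node.lf w (SCIForm.not φ) ∈ l → (w, SCIForm.not φ) ∉ E →
      negL v → freshL v l →
      Extend l E (l ++ [Node.lf v φ]) (insert (w, SCIForm.not φ) E)
  | negN (l : List Node) (E : Set (Label × SCIForm)) (w v : Label) (φ : SCIForm) :
      Node.bot ∉ l → negL w → Node.lf w (SCIForm.not φ) ∈ l → (w, SCIForm.not φ) ∉ E →
      posL v → freshL v l →
      Extend l E (l ++ [Node.lf v φ]) (insert (w, SCIForm.not φ) E)
  | impP1 (l : List Node) (E : Set (Label × SCIForm)) (w v u : Label) (φ ψ : SCIForm) :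
      Node.bot ∉ l → posL w → Node.lf w (SCIForm.imp φ ψ) ∈ l → (w, SCIForm.imp φ ψ) ∉ E →
      negL v → negL u → v ≠ u → freshL v l → freshL u l →
      Extend l E (l ++ [Node.lf v φ, Node.lf u ψ]) (insert (w, SCIForm.imp φ ψ) E)
  | impP2 (l : List Node) (E : Set (Label × SCIForm)) (w v u : Label) (φ ψ : SCIForm) :
      Node.bot ∉ l → posL w → Node.lf w (SCIForm.imp φ ψ) ∈ l → (w, SCIForm.imp φ ψ) ∉ E →
      negL v → posL u → v ≠ u → freshL v l → freshL u l →
      Extend l E (l ++ [Node.lf v φ, Node.lf u ψ]) (insert (w, SCIForm.imp φ ψ) E)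
  | impP3 (l : List Node) (E : Set (Label × SCIForm)) (w v u : Label) (φ ψ : SCIForm) :
      Node.bot ∉ l → posL w → Node.lf w (SCIForm.imp φ ψ) ∈ l → (w, SCIForm.imp φ ψ) ∉ E →
      posL v → posL u → v ≠ u → freshL v l → freshL u l →
      Extend l E (l ++ [Node.lf v φ, Node.lf u ψ]) (insert (w, SCIForm.imp φ ψ) E)
  | impN (l : List Node) (E : Set (Label × SCIForm)) (w v u : Label) (φ ψ : SCIForm) :
      Node.bot ∉ l → negL w → Node.lf w (SCIForm.imp φ ψ) ∈ l → (w, SCIForm.imp φ ψ) ∉ E →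
      posL v → negL u → v ≠ u → freshL v l → freshL u l →
      Extend l E (l ++ [Node.lf v φ, Node.lf u ψ]) (insert (w, SCIForm.imp φ ψ) E)
  | idnP1 (l : List Node) (E : Set (Label × SCIForm)) (w v u : Label) (φ ψ : SCIForm) :
      Node.bot ∉ l → posL w → Node.lf w (SCIForm.idn φ ψ) ∈ l → (w, SCIForm.idn φ ψ) ∉ E →
      posL v → posL u → v ≠ u → freshL v l → freshL u l →
      Extend l E (l ++ [Node.lf v φ, Node.lf u ψ, Node.eq v u]) (insert (w, SCIForm.idn φ ψ) E)
  | idnP2 (l : List Node) (E : Set (Label × SCIForm)) (w v u : Label) (φ ψ : SCIForm) :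
      Node.bot ∉ l → posL w → Node.lf w (SCIForm.idn φ ψ) ∈ l → (w, SCIForm.idn φ ψ) ∉ E →
      negL v → negL u → v ≠ u → freshL v l → freshL u l →
      Extend l E (l ++ [Node.lf v φ, Node.lf u ψ, Node.eq v u]) (insert (w, SCIForm.idn φ ψ) E)
  | idnN1 (l : List Node) (E : Set (Label × SCIForm)) (w v u : Label) (φ ψ : SCIForm) :
      Node.bot ∉ l → negL w → Node.lf w (SCIForm.idn φ ψ) ∈ l → (w, SCIForm.idn φ ψ) ∉ E →
      posL v → posL u → v ≠ u → freshL v l → freshL u l →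
      Extend l E (l ++ [Node.lf v φ, Node.lf u ψ, Node.neq v u]) (insert (w, SCIForm.idn φ ψ) E)
  | idnN2 (l : List Node) (E : Set (Label × SCIForm)) (w v u : Label) (φ ψ : SCIForm) :
      Node.bot ∉ l → negL w → Node.lf w (SCIForm.idn φ ψ) ∈ l → (w, SCIForm.idn φ ψ) ∉ E →
      posL v → negL u → v ≠ u → freshL v l → freshL u l →
      Extend l E (l ++ [Node.lf v φ, Node.lf u ψ]) (insert (w, SCIForm.idn φ ψ) E)
  | idnN3 (l : List Node) (E : Set (Label × SCIForm)) (w v u : Label) (φ ψ : SCIForm) :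
      Node.bot ∉ l → negL w → Node.lf w (SCIForm.idn φ ψ) ∈ l → (w, SCIForm.idn φ ψ) ∉ E →
      negL v → posL u → v ≠ u → freshL v l → freshL u l →
      Extend l E (l ++ [Node.lf v φ, Node.lf u ψ]) (insert (w, SCIForm.idn φ ψ) E)
  | idnN4 (l : List Node) (E : Set (Label × SCIForm)) (w v u : Label) (φ ψ : SCIForm) :
      Node.bot ∉ l → negL w → Node.lf w (SCIForm.idn φ ψ) ∈ l → (w, SCIForm.idn φ ψ) ∉ E →
      negL v → negL u → v ≠ u → freshL v l → freshL u l →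
      Extend l E (l ++ [Node.lf v φ, Node.lf u ψ, Node.neq v u]) (insert (w, SCIForm.idn φ ψ) E)
  | eqNeg (l : List Node) (E : Set (Label × SCIForm)) (w v u y : Label) (φ ψ : SCIForm) :
      Node.bot ∉ l → Node.lf w φ ∈ l → Node.lf v ψ ∈ l → Node.eq w v ∈ l →
      Node.lf u (SCIForm.not φ) ∈ l → Node.lf y (SCIForm.not ψ) ∈ l →
      Node.eq u y ∉ l →
      Extend l E (l ++ [Node.eq u y]) E
  | eqImp (l : List Node) (E : Set (Label × SCIForm)) (w v w' v' x z : Label) (φ ψ χ θ : SCIForm) :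
      Node.bot ∉ l → Node.lf w φ ∈ l → Node.lf v ψ ∈ l → Node.eq w v ∈ l →
      Node.lf w' χ ∈ l → Node.lf v' θ ∈ l → Node.eq w' v' ∈ l →
      Node.lf x (SCIForm.imp φ χ) ∈ l → Node.lf z (SCIForm.imp ψ θ) ∈ l →
      Node.eq x z ∉ l →
      Extend l E (l ++ [Node.eq x z]) E
  | eqIdn (l : List Node) (E : Set (Label × SCIForm)) (w v w' v' x z : Label) (φ ψ χ θ : SCIForm) :
      Node.bot ∉ l → Node.lf w φ ∈ l → Node.lf v ψ ∈ l → Node.eq w v ∈ l →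
      Node.lf w' χ ∈ l → Node.lf v' θ ∈ l → Node.eq w' v' ∈ l →
      Node.lf x (SCIForm.idn φ χ) ∈ l → Node.lf z (SCIForm.idn ψ θ) ∈ l →
      Node.eq x z ∉ l →
      Extend l E (l ++ [Node.eq x z]) E
  | ruleF (l : List Node) (E : Set (Label × SCIForm)) (w v : Label) (φ : SCIForm) :
      Node.bot ∉ l → Node.lf w φ ∈ l → Node.lf v φ ∈ l → Node.eq w v ∉ l →
      Extend l E (l ++ [Node.eq w v]) E
  | ruleSym (l : List Node) (E : Set (Label × SCIForm)) (w v : Label) :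
      Node.bot ∉ l → Node.eq w v ∈ l → Node.eq v w ∉ l →
      Extend l E (l ++ [Node.eq v w]) E
  | ruleTran (l : List Node) (E : Set (Label × SCIForm)) (w v u : Label) :
      Node.bot ∉ l → Node.eq w v ∈ l → Node.eq v u ∈ l → Node.eq w u ∉ l →
      Extend l E (l ++ [Node.eq w u]) E
  | bot1 (l : List Node) (E : Set (Label × SCIForm)) (w v : Label) :
      Node.bot ∉ l → Node.eq w v ∈ l → Node.neq w v ∈ l →
      Extend l E (l ++ [Node.bot]) E
  | bot2 (l : List Node) (E : Set (Label × SCIForm)) (w v : Label) :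
      Node.bot ∉ l → posL w → negL v → Node.eq w v ∈ l →
      Extend l E (l ++ [Node.bot]) E

/-- `ClosedTab l E` holds iff there is a closed TC_SCI-tableau all of whose
branches extend the branch `l` (with `E` the set of labelled formulas already
decomposed on `l`): either a closure rule applies to `l`, or some rule of
TC_SCI can be applied so that all resulting branches carry closed tableaux. -/
inductive ClosedTab : List Node → Set (Label × SCIForm) → Prop
  | clos1 (l : List Node) (E : Set (Label × SCIForm)) (w v : Label) :
      Node.eq w v ∈ l → Node.neq w v ∈ l → ClosedTab l E
  | clos2 (l : List Node) (E : Set (Label × SCIForm)) (w v : Label) :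
      posL w → negL v → Node.eq w v ∈ l → ClosedTab l E
  | negP (l : List Node) (E : Set (Label × SCIForm)) (w v : Label) (φ : SCIForm) :
      posL w → Node.lf w (SCIForm.not φ) ∈ l → (w, SCIForm.not φ) ∉ E →
      negL v → freshL v l →
      ClosedTab (l ++ [Node.lf v φ]) (insert (w, SCIForm.not φ) E) →
      ClosedTab l E
  | negN (l : List Node) (E : Set (Label × SCIForm)) (w v : Label) (φ : SCIForm) :
      negL w → Node.lf w (SCIForm.not φ) ∈ l → (w, SCIForm.not φ) ∉ E →
      posL v → freshL v l →
      ClosedTab (l ++ [Node.lf v φ]) (insert (w, SCIForm.not φ) E) →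
      ClosedTab l E
  | impP (l : List Node) (E : Set (Label × SCIForm)) (w : Label) (φ ψ : SCIForm)
      (v1 u1 v2 u2 v3 u3 : Label) :
      posL w → Node.lf w (SCIForm.imp φ ψ) ∈ l → (w, SCIForm.imp φ ψ) ∉ E →
      negL v1 → negL u1 → v1 ≠ u1 → freshL v1 l → freshL u1 l →
      negL v2 → posL u2 → v2 ≠ u2 → freshL v2 l → freshL u2 l →
      posL v3 → posL u3 → v3 ≠ u3 → freshL v3 l → freshL u3 l →
      ClosedTab (l ++ [Node.lf v1 φ, Node.lf u1 ψ]) (insert (w, SCIForm.imp φ ψ) E) →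
      ClosedTab (l ++ [Node.lf v2 φ, Node.lf u2 ψ]) (insert (w, SCIForm.imp φ ψ) E) →
      ClosedTab (l ++ [Node.lf v3 φ, Node.lf u3 ψ]) (insert (w, SCIForm.imp φ ψ) E) →
      ClosedTab l E
  | impN (l : List Node) (E : Set (Label × SCIForm)) (w v u : Label) (φ ψ : SCIForm) :
      negL w → Node.lf w (SCIForm.imp φ ψ) ∈ l → (w, SCIForm.imp φ ψ) ∉ E →
      posL v → negL u → v ≠ u → freshL v l → freshL u l →
      ClosedTab (l ++ [Node.lf v φ, Node.lf u ψ]) (insert (w, SCIForm.imp φ ψ) E) →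
      ClosedTab l E
  | idnP (l : List Node) (E : Set (Label × SCIForm)) (w : Label) (φ ψ : SCIForm)
      (v1 u1 v2 u2 : Label) :
      posL w → Node.lf w (SCIForm.idn φ ψ) ∈ l → (w, SCIForm.idn φ ψ) ∉ E →
      posL v1 → posL u1 → v1 ≠ u1 → freshL v1 l → freshL u1 l →
      negL v2 → negL u2 → v2 ≠ u2 → freshL v2 l → freshL u2 l →
      ClosedTab (l ++ [Node.lf v1 φ, Node.lf u1 ψ, Node.eq v1 u1]) (insert (w, SCIForm.idn φ ψ) E) →
      ClosedTab (l ++ [Node.lf v2 φ, Node.lf u2 ψ, Node.eq v2 u2]) (insert (w, SCIForm.idn φ ψ) E) →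
      ClosedTab l E
  | idnN (l : List Node) (E : Set (Label × SCIForm)) (w : Label) (φ ψ : SCIForm)
      (v1 u1 v2 u2 v3 u3 v4 u4 : Label) :
      negL w → Node.lf w (SCIForm.idn φ ψ) ∈ l → (w, SCIForm.idn φ ψ) ∉ E →
      posL v1 → posL u1 → v1 ≠ u1 → freshL v1 l → freshL u1 l →
      posL v2 → negL u2 → v2 ≠ u2 → freshL v2 l → freshL u2 l →
      negL v3 → posL u3 → v3 ≠ u3 → freshL v3 l → freshL u3 l →
      negL v4 → negL u4 → v4 ≠ u4 → freshL v4 l → freshL u4 l →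
      ClosedTab (l ++ [Node.lf v1 φ, Node.lf u1 ψ, Node.neq v1 u1]) (insert (w, SCIForm.idn φ ψ) E) →
      ClosedTab (l ++ [Node.lf v2 φ, Node.lf u2 ψ]) (insert (w, SCIForm.idn φ ψ) E) →
      ClosedTab (l ++ [Node.lf v3 φ, Node.lf u3 ψ]) (insert (w, SCIForm.idn φ ψ) E) →
      ClosedTab (l ++ [Node.lf v4 φ, Node.lf u4 ψ, Node.neq v4 u4]) (insert (w, SCIForm.idn φ ψ) E) →
      ClosedTab l E
  | eqNeg (l : List Node) (E : Set (Label × SCIForm)) (w v u y : Label) (φ ψ : SCIForm) :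
      Node.lf w φ ∈ l → Node.lf v ψ ∈ l → Node.eq w v ∈ l →
      Node.lf u (SCIForm.not φ) ∈ l → Node.lf y (SCIForm.not ψ) ∈ l →
      Node.eq u y ∉ l →
      ClosedTab (l ++ [Node.eq u y]) E → ClosedTab l E
  | eqImp (l : List Node) (E : Set (Label × SCIForm)) (w v w' v' x z : Label) (φ ψ χ θ : SCIForm) :
      Node.lf w φ ∈ l → Node.lf v ψ ∈ l → Node.eq w v ∈ l →
      Node.lf w' χ ∈ l → Node.lf v' θ ∈ l → Node.eq w' v' ∈ l →
      Node.lf x (SCIForm.imp φ χ) ∈ l → Node.lf z (SCIForm.imp ψ θ) ∈ l →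
      Node.eq x z ∉ l →
      ClosedTab (l ++ [Node.eq x z]) E → ClosedTab l E
  | eqIdn (l : List Node) (E : Set (Label × SCIForm)) (w v w' v' x z : Label) (φ ψ χ θ : SCIForm) :
      Node.lf w φ ∈ l → Node.lf v ψ ∈ l → Node.eq w v ∈ l →
      Node.lf w' χ ∈ l → Node.lf v' θ ∈ l → Node.eq w' v' ∈ l →
      Node.lf x (SCIForm.idn φ χ) ∈ l → Node.lf z (SCIForm.idn ψ θ) ∈ l →
      Node.eq x z ∉ l →
      ClosedTab (l ++ [Node.eq x z]) E → ClosedTab l E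
  | ruleF (l : List Node) (E : Set (Label × SCIForm)) (w v : Label) (φ : SCIForm) :
      Node.lf w φ ∈ l → Node.lf v φ ∈ l → Node.eq w v ∉ l →
      ClosedTab (l ++ [Node.eq w v]) E → ClosedTab l E
  | ruleSym (l : List Node) (E : Set (Label × SCIForm)) (w v : Label) :
      Node.eq w v ∈ l → Node.eq v w ∉ l →
      ClosedTab (l ++ [Node.eq v w]) E → ClosedTab l E
  | ruleTran (l : List Node) (E : Set (Label × SCIForm)) (w v u : Label) :
      Node.eq w v ∈ l → Node.eq v u ∈ l → Node.eq w u ∉ l →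
      ClosedTab (l ++ [Node.eq w u]) E → ClosedTab l E

/-- The node matching predicate: is `n` a labelled formula with formula `ψ`? -/
def isLFof (ψ : SCIForm) : Node → Bool
  | Node.lf _ θ => decide (θ = ψ)
  | _ => false

/-- `w : ψ` is the ψ-urfather on the branch `l`: it is the first occurrence of a
labelled formula with formula `ψ` on `l`. -/
def IsUrfather (w : Label) (ψ : SCIForm) (l : List Node) : Prop :=
  l.find? (isLFof ψ) = some (Node.lf w ψ)

/-- One application of a TC_SCI+(UB) rule extending a single branch: as in
TC_SCI, but a decomposition rule may be applied to a labelled formula only if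
it is the urfather of its formula on the branch. -/
inductive ExtendUB : List Node → Set (Label × SCIForm) → List Node → Set (Label × SCIForm) → Prop
  | negP (l : List Node) (E : Set (Label × SCIForm)) (w v : Label) (φ : SCIForm) :
      Node.bot ∉ l → posL w → Node.lf w (SCIForm.not φ) ∈ l → (w, SCIForm.not φ) ∉ E → IsUrfather w (SCIForm.not φ) l →
      negL v → freshL v l →
      ExtendUB l E (l ++ [Node.lf v φ]) (insert (w, SCIForm.not φ) E)
  | negN (l : List Node) (E : Set (Label × SCIForm)) (w v : Label) (φ : SCIForm) :
      Node.bot ∉ l → negL w → Node.lf w (SCIForm.not φ) ∈ l → (w, SCIForm.not φ) ∉ E → IsUrfather w (SCIForm.not φ) l →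
      posL v → freshL v l →
      ExtendUB l E (l ++ [Node.lf v φ]) (insert (w, SCIForm.not φ) E)
  | impP1 (l : List Node) (E : Set (Label × SCIForm)) (w v u : Label) (φ ψ : SCIForm) :
      Node.bot ∉ l → posL w → Node.lf w (SCIForm.imp φ ψ) ∈ l → (w, SCIForm.imp φ ψ) ∉ E → IsUrfather w (SCIForm.imp φ ψ) l →
      negL v → negL u → v ≠ u → freshL v l → freshL u l →
      ExtendUB l E (l ++ [Node.lf v φ, Node.lf u ψ]) (insert (w, SCIForm.imp φ ψ) E)
  | impP2 (l : List Node) (E : Set (Label × SCIForm)) (w v u : Label) (φ ψ : SCIForm) :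
      Node.bot ∉ l → posL w → Node.lf w (SCIForm.imp φ ψ) ∈ l → (w, SCIForm.imp φ ψ) ∉ E → IsUrfather w (SCIForm.imp φ ψ) l →
      negL v → posL u → v ≠ u → freshL v l → freshL u l →
      ExtendUB l E (l ++ [Node.lf v φ, Node.lf u ψ]) (insert (w, SCIForm.imp φ ψ) E)
  | impP3 (l : List Node) (E : Set (Label × SCIForm)) (w v u : Label) (φ ψ : SCIForm) :
      Node.bot ∉ l → posL w → Node.lf w (SCIForm.imp φ ψ) ∈ l → (w, SCIForm.imp φ ψ) ∉ E → IsUrfather w (SCIForm.imp φ ψ) l →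
      posL v → posL u → v ≠ u → freshL v l → freshL u l →
      ExtendUB l E (l ++ [Node.lf v φ, Node.lf u ψ]) (insert (w, SCIForm.imp φ ψ) E)
  | impN (l : List Node) (E : Set (Label × SCIForm)) (w v u : Label) (φ ψ : SCIForm) :
      Node.bot ∉ l → negL w → Node.lf w (SCIForm.imp φ ψ) ∈ l → (w, SCIForm.imp φ ψ) ∉ E → IsUrfather w (SCIForm.imp φ ψ) l →
      posL v → negL u → v ≠ u → freshL v l → freshL u l →
      ExtendUB l E (l ++ [Node.lf v φ, Node.lf u ψ]) (insert (w, SCIForm.imp φ ψ) E)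
  | idnP1 (l : List Node) (E : Set (Label × SCIForm)) (w v u : Label) (φ ψ : SCIForm) :
      Node.bot ∉ l → posL w → Node.lf w (SCIForm.idn φ ψ) ∈ l → (w, SCIForm.idn φ ψ) ∉ E → IsUrfather w (SCIForm.idn φ ψ) l →
      posL v → posL u → v ≠ u → freshL v l → freshL u l →
      ExtendUB l E (l ++ [Node.lf v φ, Node.lf u ψ, Node.eq v u]) (insert (w, SCIForm.idn φ ψ) E)
  | idnP2 (l : List Node) (E : Set (Label × SCIForm)) (w v u : Label) (φ ψ : SCIForm) :
      Node.bot ∉ l → posL w → Node.lf w (SCIForm.idn φ ψ) ∈ l → (w, SCIForm.idn φ ψ) ∉ E → IsUrfather w (SCIForm.idn φ ψ) l →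
      negL v → negL u → v ≠ u → freshL v l → freshL u l →
      ExtendUB l E (l ++ [Node.lf v φ, Node.lf u ψ, Node.eq v u]) (insert (w, SCIForm.idn φ ψ) E)
  | idnN1 (l : List Node) (E : Set (Label × SCIForm)) (w v u : Label) (φ ψ : SCIForm) :
      Node.bot ∉ l → negL w → Node.lf w (SCIForm.idn φ ψ) ∈ l → (w, SCIForm.idn φ ψ) ∉ E → IsUrfather w (SCIForm.idn φ ψ) l →
      posL v → posL u → v ≠ u → freshL v l → freshL u l →
      ExtendUB l E (l ++ [Node.lf v φ, Node.lf u ψ, Node.neq v u]) (insert (w, SCIForm.idn φ ψ) E)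
  | idnN2 (l : List Node) (E : Set (Label × SCIForm)) (w v u : Label) (φ ψ : SCIForm) :
      Node.bot ∉ l → negL w → Node.lf w (SCIForm.idn φ ψ) ∈ l → (w, SCIForm.idn φ ψ) ∉ E → IsUrfather w (SCIForm.idn φ ψ) l →
      posL v → negL u → v ≠ u → freshL v l → freshL u l →
      ExtendUB l E (l ++ [Node.lf v φ, Node.lf u ψ]) (insert (w, SCIForm.idn φ ψ) E)
  | idnN3 (l : List Node) (E : Set (Label × SCIForm)) (w v u : Label) (φ ψ : SCIForm) :
      Node.bot ∉ l → negL w → Node.lf w (SCIForm.idn φ ψ) ∈ l → (w, SCIForm.idn φ ψ) ∉ E → IsUrfather w (SCIForm.idn φ ψ) l →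
      negL v → posL u → v ≠ u → freshL v l → freshL u l →
      ExtendUB l E (l ++ [Node.lf v φ, Node.lf u ψ]) (insert (w, SCIForm.idn φ ψ) E)
  | idnN4 (l : List Node) (E : Set (Label × SCIForm)) (w v u : Label) (φ ψ : SCIForm) :
      Node.bot ∉ l → negL w → Node.lf w (SCIForm.idn φ ψ) ∈ l → (w, SCIForm.idn φ ψ) ∉ E → IsUrfather w (SCIForm.idn φ ψ) l →
      negL v → negL u → v ≠ u → freshL v l → freshL u l →
      ExtendUB l E (l ++ [Node.lf v φ, Node.lf u ψ, Node.neq v u]) (insert (w, SCIForm.idn φ ψ) E)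
  | eqNeg (l : List Node) (E : Set (Label × SCIForm)) (w v u y : Label) (φ ψ : SCIForm) :
      Node.bot ∉ l → Node.lf w φ ∈ l → Node.lf v ψ ∈ l → Node.eq w v ∈ l →
      Node.lf u (SCIForm.not φ) ∈ l → Node.lf y (SCIForm.not ψ) ∈ l →
      Node.eq u y ∉ l →
      ExtendUB l E (l ++ [Node.eq u y]) E
  | eqImp (l : List Node) (E : Set (Label × SCIForm)) (w v w' v' x z : Label) (φ ψ χ θ : SCIForm) :
      Node.bot ∉ l → Node.lf w φ ∈ l → Node.lf v ψ ∈ l → Node.eq w v ∈ l →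
      Node.lf w' χ ∈ l → Node.lf v' θ ∈ l → Node.eq w' v' ∈ l →
      Node.lf x (SCIForm.imp φ χ) ∈ l → Node.lf z (SCIForm.imp ψ θ) ∈ l →
      Node.eq x z ∉ l →
      ExtendUB l E (l ++ [Node.eq x z]) E
  | eqIdn (l : List Node) (E : Set (Label × SCIForm)) (w v w' v' x z : Label) (φ ψ χ θ : SCIForm) :
      Node.bot ∉ l → Node.lf w φ ∈ l → Node.lf v ψ ∈ l → Node.eq w v ∈ l →
      Node.lf w' χ ∈ l → Node.lf v' θ ∈ l → Node.eq w' v' ∈ l →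
      Node.lf x (SCIForm.idn φ χ) ∈ l → Node.lf z (SCIForm.idn ψ θ) ∈ l →
      Node.eq x z ∉ l →
      ExtendUB l E (l ++ [Node.eq x z]) E
  | ruleF (l : List Node) (E : Set (Label × SCIForm)) (w v : Label) (φ : SCIForm) :
      Node.bot ∉ l → Node.lf w φ ∈ l → Node.lf v φ ∈ l → Node.eq w v ∉ l →
      ExtendUB l E (l ++ [Node.eq w v]) E
  | ruleSym (l : List Node) (E : Set (Label × SCIForm)) (w v : Label) :
      Node.bot ∉ l → Node.eq w v ∈ l → Node.eq v w ∉ l →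
      ExtendUB l E (l ++ [Node.eq v w]) E
  | ruleTran (l : List Node) (E : Set (Label × SCIForm)) (w v u : Label) :
      Node.bot ∉ l → Node.eq w v ∈ l → Node.eq v u ∈ l → Node.eq w u ∉ l →
      ExtendUB l E (l ++ [Node.eq w u]) E
  | bot1 (l : List Node) (E : Set (Label × SCIForm)) (w v : Label) :
      Node.bot ∉ l → Node.eq w v ∈ l → Node.neq w v ∈ l →
      ExtendUB l E (l ++ [Node.bot]) E
  | bot2 (l : List Node) (E : Set (Label × SCIForm)) (w v : Label) :
      Node.bot ∉ l → posL w → negL v → Node.eq w v ∈ l →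
      ExtendUB l E (l ++ [Node.bot]) E

/-- `ClosedTabUB l E`: there is a closed TC_SCI+(UB)-tableau all of whose
branches extend the branch `l` (urfather blocking imposed on decomposition rules). -/
inductive ClosedTabUB : List Node → Set (Label × SCIForm) → Prop
  | clos1 (l : List Node) (E : Set (Label × SCIForm)) (w v : Label) :
      Node.eq w v ∈ l → Node.neq w v ∈ l → ClosedTabUB l E
  | clos2 (l : List Node) (E : Set (Label × SCIForm)) (w v : Label) :
      posL w → negL v → Node.eq w v ∈ l → ClosedTabUB l E
  | negP (l : List Node) (E : Set (Label × SCIForm)) (w v : Label) (φ : SCIForm) :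
      posL w → Node.lf w (SCIForm.not φ) ∈ l → (w, SCIForm.not φ) ∉ E → IsUrfather w (SCIForm.not φ) l →
      negL v → freshL v l →
      ClosedTabUB (l ++ [Node.lf v φ]) (insert (w, SCIForm.not φ) E) →
      ClosedTabUB l E
  | negN (l : List Node) (E : Set (Label × SCIForm)) (w v : Label) (φ : SCIForm) :
      negL w → Node.lf w (SCIForm.not φ) ∈ l → (w, SCIForm.not φ) ∉ E → IsUrfather w (SCIForm.not φ) l →
      posL v → freshL v l →
      ClosedTabUB (l ++ [Node.lf v φ]) (insert (w, SCIForm.not φ) E) →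
      ClosedTabUB l E
  | impP (l : List Node) (E : Set (Label × SCIForm)) (w : Label) (φ ψ : SCIForm)
      (v1 u1 v2 u2 v3 u3 : Label) :
      posL w → Node.lf w (SCIForm.imp φ ψ) ∈ l → (w, SCIForm.imp φ ψ) ∉ E → IsUrfather w (SCIForm.imp φ ψ) l →
      negL v1 → negL u1 → v1 ≠ u1 → freshL v1 l → freshL u1 l →
      negL v2 → posL u2 → v2 ≠ u2 → freshL v2 l → freshL u2 l →
      posL v3 → posL u3 → v3 ≠ u3 → freshL v3 l → freshL u3 l →
      ClosedTabUB (l ++ [Node.lf v1 φ, Node.lf u1 ψ]) (insert (w, SCIForm.imp φ ψ) E) →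
      ClosedTabUB (l ++ [Node.lf v2 φ, Node.lf u2 ψ]) (insert (w, SCIForm.imp φ ψ) E) →
      ClosedTabUB (l ++ [Node.lf v3 φ, Node.lf u3 ψ]) (insert (w, SCIForm.imp φ ψ) E) →
      ClosedTabUB l E
  | impN (l : List Node) (E : Set (Label × SCIForm)) (w v u : Label) (φ ψ : SCIForm) :
      negL w → Node.lf w (SCIForm.imp φ ψ) ∈ l → (w, SCIForm.imp φ ψ) ∉ E → IsUrfather w (SCIForm.imp φ ψ) l →
      posL v → negL u → v ≠ u → freshL v l → freshL u l →
      ClosedTabUB (l ++ [Node.lf v φ, Node.lf u ψ]) (insert (w, SCIForm.imp φ ψ) E) →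
      ClosedTabUB l E
  | idnP (l : List Node) (E : Set (Label × SCIForm)) (w : Label) (φ ψ : SCIForm)
      (v1 u1 v2 u2 : Label) :
      posL w → Node.lf w (SCIForm.idn φ ψ) ∈ l → (w, SCIForm.idn φ ψ) ∉ E → IsUrfather w (SCIForm.idn φ ψ) l →
      posL v1 → posL u1 → v1 ≠ u1 → freshL v1 l → freshL u1 l →
      negL v2 → negL u2 → v2 ≠ u2 → freshL v2 l → freshL u2 l →
      ClosedTabUB (l ++ [Node.lf v1 φ, Node.lf u1 ψ, Node.eq v1 u1]) (insert (w, SCIForm.idn φ ψ) E) →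
      ClosedTabUB (l ++ [Node.lf v2 φ, Node.lf u2 ψ, Node.eq v2 u2]) (insert (w, SCIForm.idn φ ψ) E) →
      ClosedTabUB l E
  | idnN (l : List Node) (E : Set (Label × SCIForm)) (w : Label) (φ ψ : SCIForm)
      (v1 u1 v2 u2 v3 u3 v4 u4 : Label) :
      negL w → Node.lf w (SCIForm.idn φ ψ) ∈ l → (w, SCIForm.idn φ ψ) ∉ E → IsUrfather w (SCIForm.idn φ ψ) l →
      posL v1 → posL u1 → v1 ≠ u1 → freshL v1 l → freshL u1 l →
      posL v2 → negL u2 → v2 ≠ u2 → freshL v2 l → freshL u2 l →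
      negL v3 → posL u3 → v3 ≠ u3 → freshL v3 l → freshL u3 l →
      negL v4 → negL u4 → v4 ≠ u4 → freshL v4 l → freshL u4 l →
      ClosedTabUB (l ++ [Node.lf v1 φ, Node.lf u1 ψ, Node.neq v1 u1]) (insert (w, SCIForm.idn φ ψ) E) →
      ClosedTabUB (l ++ [Node.lf v2 φ, Node.lf u2 ψ]) (insert (w, SCIForm.idn φ ψ) E) →
      ClosedTabUB (l ++ [Node.lf v3 φ, Node.lf u3 ψ]) (insert (w, SCIForm.idn φ ψ) E) →
      ClosedTabUB (l ++ [Node.lf v4 φ, Node.lf u4 ψ, Node.neq v4 u4]) (insert (w, SCIForm.idn φ ψ) E) →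
      ClosedTabUB l E
  | eqNeg (l : List Node) (E : Set (Label × SCIForm)) (w v u y : Label) (φ ψ : SCIForm) :
      Node.lf w φ ∈ l → Node.lf v ψ ∈ l → Node.eq w v ∈ l →
      Node.lf u (SCIForm.not φ) ∈ l → Node.lf y (SCIForm.not ψ) ∈ l →
      Node.eq u y ∉ l →
      ClosedTabUB (l ++ [Node.eq u y]) E → ClosedTabUB l E
  | eqImp (l : List Node) (E : Set (Label × SCIForm)) (w v w' v' x z : Label) (φ ψ χ θ : SCIForm) :
      Node.lf w φ ∈ l → Node.lf v ψ ∈ l → Node.eq w v ∈ l →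
      Node.lf w' χ ∈ l → Node.lf v' θ ∈ l → Node.eq w' v' ∈ l →
      Node.lf x (SCIForm.imp φ χ) ∈ l → Node.lf z (SCIForm.imp ψ θ) ∈ l →
      Node.eq x z ∉ l →
      ClosedTabUB (l ++ [Node.eq x z]) E → ClosedTabUB l E
  | eqIdn (l : List Node) (E : Set (Label × SCIForm)) (w v w' v' x z : Label) (φ ψ χ θ : SCIForm) :
      Node.lf w φ ∈ l → Node.lf v ψ ∈ l → Node.eq w v ∈ l →
      Node.lf w' χ ∈ l → Node.lf v' θ ∈ l → Node.eq w' v' ∈ l →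
      Node.lf x (SCIForm.idn φ χ) ∈ l → Node.lf z (SCIForm.idn ψ θ) ∈ l →
      Node.eq x z ∉ l →
      ClosedTabUB (l ++ [Node.eq x z]) E → ClosedTabUB l E
  | ruleF (l : List Node) (E : Set (Label × SCIForm)) (w v : Label) (φ : SCIForm) :
      Node.lf w φ ∈ l → Node.lf v φ ∈ l → Node.eq w v ∉ l →
      ClosedTabUB (l ++ [Node.eq w v]) E → ClosedTabUB l E
  | ruleSym (l : List Node) (E : Set (Label × SCIForm)) (w v : Label) :
      Node.eq w v ∈ l → Node.eq v w ∉ l →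
      ClosedTabUB (l ++ [Node.eq v w]) E → ClosedTabUB l E
  | ruleTran (l : List Node) (E : Set (Label × SCIForm)) (w v u : Label) :
      Node.eq w v ∈ l → Node.eq v u ∈ l → Node.eq w u ∉ l →
      ClosedTabUB (l ++ [Node.eq w u]) E → ClosedTabUB l E

/-! ### Section A: subformulas, arity, counting -/

open SCIForm in
/-- The finite set of (distinct) subformulas. -/
def subf : SCIForm → Finset SCIForm
  | atom n => {atom n}
  | SCIForm.not ψ => insert (SCIForm.not ψ) (subf ψ)
  | imp ψ χ => insert (imp ψ χ) (subf ψ ∪ subf χ)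
  | idn ψ χ => insert (idn ψ χ) (subf ψ ∪ subf χ)

/-- Arity of the top connective. -/
def ar : SCIForm → ℕ
  | SCIForm.atom _ => 0
  | SCIForm.not _ => 1
  | SCIForm.imp _ _ => 2
  | SCIForm.idn _ _ => 2

lemma mem_subf_self (φ : SCIForm) : φ ∈ subf φ := by
  cases φ <;> simp [subf]

lemma subf_trans {ψ φ : SCIForm} (h : ψ ∈ subf φ) : subf ψ ⊆ subf φ := by
  induction φ with
  | atom n => simp [subf] at h; subst h; exact fun _ h => h
  | not χ ih =>
      simp [subf] at h
      rcases h with h | h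
      · subst h; exact fun _ h => h
      · exact fun x hx => by simp [subf]; exact Or.inr (ih h hx)
  | imp χ θ ih1 ih2 =>
      simp [subf] at h
      rcases h with h | h | h
      · subst h; exact fun _ h => h
      · exact fun x hx => by simp [subf]; exact Or.inr (Or.inl (ih1 h hx))
      · exact fun x hx => by simp [subf]; exact Or.inr (Or.inr (ih2 h hx))
  | idn χ θ ih1 ih2 =>
      simp [subf] at h
      rcases h with h | h | h
      · subst h; exact fun _ h => h
      · exact fun x hx => by simp [subf]; exact Or.inr (Or.inl (ih1 h hx))
      · exact fun x hx => by simp [subf]; exact Or.inr (Or.inr (ih2 h hx))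

lemma one_le_size (φ : SCIForm) : 1 ≤ φ.size := by
  cases φ <;> simp [SCIForm.size] <;> omega

lemma card_subf_le (φ : SCIForm) : (subf φ).card ≤ φ.size := by
  induction φ with
  | atom n => simp [subf, SCIForm.size]
  | not χ ih =>
      refine le_trans (Finset.card_insert_le _ _) ?_
      simp [SCIForm.size]; omega
  | imp χ θ ih1 ih2 =>
      refine le_trans (Finset.card_insert_le _ _) ?_
      have := Finset.card_union_le (subf χ) (subf θ)
      simp [SCIForm.size]; omega
  | idn χ θ ih1 ih2 =>
      refine le_trans (Finset.card_insert_le _ _) ?_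
      have := Finset.card_union_le (subf χ) (subf θ)
      simp [SCIForm.size]; omega

lemma sum_ar_insert_le (a : SCIForm) (s : Finset SCIForm) :
    ∑ ψ ∈ insert a s, ar ψ ≤ ar a + ∑ ψ ∈ s, ar ψ := by
  by_cases h : a ∈ s
  · rw [Finset.insert_eq_self.2 h]; omega
  · rw [Finset.sum_insert h]

lemma sum_ar_union_le (s t : Finset SCIForm) :
    ∑ ψ ∈ s ∪ t, ar ψ ≤ (∑ ψ ∈ s, ar ψ) + ∑ ψ ∈ t, ar ψ := by
  classical
  calc ∑ ψ ∈ s ∪ t, ar ψ ≤ ∑ ψ ∈ s ∪ t, ar ψ + ∑ ψ ∈ s ∩ t, ar ψ := by omega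
  _ = _ := Finset.sum_union_inter

lemma sum_ar_subf (φ : SCIForm) : (∑ ψ ∈ subf φ, ar ψ) + 1 ≤ φ.size := by
  induction φ with
  | atom n => simp [subf, ar, SCIForm.size]
  | not χ ih =>
      have := sum_ar_insert_le (SCIForm.not χ) (subf χ)
      simp only [subf, SCIForm.size]
      have : ∑ ψ ∈ insert (SCIForm.not χ) (subf χ), ar ψ ≤ 1 + ∑ ψ ∈ subf χ, ar ψ := by
        simpa [ar] using sum_ar_insert_le (SCIForm.not χ) (subf χ)
      omega
  | imp χ θ ih1 ih2 =>
      simp only [subf, SCIForm.size]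
      have h1 : ∑ ψ ∈ insert (SCIForm.imp χ θ) (subf χ ∪ subf θ), ar ψ
          ≤ 2 + ∑ ψ ∈ subf χ ∪ subf θ, ar ψ := by
        simpa [ar] using sum_ar_insert_le (SCIForm.imp χ θ) (subf χ ∪ subf θ)
      have h2 := sum_ar_union_le (subf χ) (subf θ)
      omega
  | idn χ θ ih1 ih2 =>
      simp only [subf, SCIForm.size]
      have h1 : ∑ ψ ∈ insert (SCIForm.idn χ θ) (subf χ ∪ subf θ), ar ψ
          ≤ 2 + ∑ ψ ∈ subf χ ∪ subf θ, ar ψ := by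
        simpa [ar] using sum_ar_insert_le (SCIForm.idn χ θ) (subf χ ∪ subf θ)
      have h2 := sum_ar_union_le (subf χ) (subf θ)
      omega
/-! ### Section B: list helpers -/

/-- labels carrying formulas on a branch -/
def lfL (l : List Node) : List Label :=
  l.filterMap fun n => match n with | Node.lf w _ => some w | _ => none

/-- equality pairs on a branch -/
def eqP (l : List Node) : List (Label × Label) :=
  l.filterMap fun n => match n with | Node.eq w v => some (w, v) | _ => none

lemma lfL_append (l t : List Node) : lfL (l ++ t) = lfL l ++ lfL t :=
  List.filterMap_append ..

lemma eqP_append (l t : List Node) : eqP (l ++ t) = eqP l ++ eqP t :=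
  List.filterMap_append ..

lemma mem_lfL {w : Label} {ψ : SCIForm} {l : List Node} (h : Node.lf w ψ ∈ l) :
    w ∈ lfL l := by
  simp only [lfL, List.mem_filterMap]
  exact ⟨Node.lf w ψ, h, rfl⟩

lemma mem_eqP {w v : Label} {l : List Node} : (w, v) ∈ eqP l ↔ Node.eq w v ∈ l := by
  simp only [eqP, List.mem_filterMap]
  constructor
  · rintro ⟨n, hn, he⟩
    cases n <;> simp_all
  · intro h; exact ⟨Node.eq w v, h, rfl⟩

lemma lfL_single_lf (v : Label) (φ : SCIForm) : lfL [Node.lf v φ] = [v] := rfl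
lemma lfL_single_eq (v u : Label) : lfL [Node.eq v u] = [] := rfl
lemma lfL_single_neq (v u : Label) : lfL [Node.neq v u] = [] := rfl
lemma lfL_single_bot : lfL [Node.bot] = [] := rfl

lemma urfather_append {w : Label} {ψ : SCIForm} {l t : List Node}
    (h : IsUrfather w ψ l) : IsUrfather w ψ (l ++ t) := by
  unfold IsUrfather at *
  rw [List.find?_append, h]; rfl

lemma urfather_unique {w w' : Label} {ψ : SCIForm} {l : List Node}
    (h : IsUrfather w ψ l) (h' : IsUrfather w' ψ l) : w = w' := by
  unfold IsUrfather at *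
  rw [h] at h'
  simp_all

lemma urfather_exists {w : Label} {ψ : SCIForm} {l : List Node}
    (h : Node.lf w ψ ∈ l) : ∃ u, IsUrfather u ψ l := by
  have hex : ∃ n ∈ l, isLFof ψ n = true := ⟨Node.lf w ψ, h, by simp [isLFof]⟩
  rw [← List.find?_isSome] at hex
  obtain ⟨n, hn⟩ := Option.isSome_iff_exists.1 hex
  have hsat := List.find?_some hn
  cases n with
  | lf u θ =>
      have : θ = ψ := by simpa [isLFof] using hsat
      subst this
      exact ⟨u, hn⟩
  | eq a b => simp [isLFof] at hsat
  | neq a b => simp [isLFof] at hsat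
  | bot => simp [isLFof] at hsat

lemma urfather_mem {w : Label} {ψ : SCIForm} {l : List Node}
    (h : IsUrfather w ψ l) : Node.lf w ψ ∈ l :=
  List.mem_of_find?_eq_some h

/-- a bound above all label indices on the branch -/
def lbound (l : List Node) : ℕ :=
  ((lfL l).map Prod.snd).foldr max 0 + 1

lemma fresh_of_ge {l : List Node} {k : ℕ} (h : lbound l ≤ k) (b : Bool) :
    freshL (b, k) l := by
  intro ψ hmem
  have hw : (b, k) ∈ lfL l := mem_lfL hmem
  have : k ∈ (lfL l).map Prod.snd := List.mem_map_of_mem hw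
  have hle : k ≤ ((lfL l).map Prod.snd).foldr max 0 := by
    have := List.le_max_of_le (l := (lfL l).map Prod.snd) this (le_refl k)
    simpa using this
  simp [lbound] at h
  omega

lemma extend_prefix {l E l' E'} (h : ExtendUB l E l' E') : ∃ t, l' = l ++ t := by
  cases h <;> exact ⟨_, rfl⟩

lemma extend_mono {l E l' E'} (h : ExtendUB l E l' E') : ∀ n ∈ l, n ∈ l' := by
  obtain ⟨t, rfl⟩ := extend_prefix h
  intro n hn; exact List.mem_append_left _ hn
/-! ### Section C: branch invariant and counting -/

open Classical in
/-- set of formulas already decomposed -/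
noncomputable def EF (φ : SCIForm) (E : Set (Label × SCIForm)) : Finset SCIForm :=
  (subf φ).filter (fun ψ => ∃ w, (w, ψ) ∈ E)

/-- decomposition witnesses recorded for `(u, ψ) ∈ E` -/
def WitP (u : Label) (ψ : SCIForm) (l : List Node) : Prop :=
  match ψ with
  | SCIForm.atom _ => True
  | SCIForm.not χ => ∃ v, Node.lf v χ ∈ l ∧ v.1 = !u.1
  | SCIForm.imp χ θ => ∃ v x, Node.lf v χ ∈ l ∧ Node.lf x θ ∈ l ∧
      (if u.1 then (!v.1 || x.1) = true else (v.1 && !x.1) = true)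
  | SCIForm.idn χ θ => ∃ v x, Node.lf v χ ∈ l ∧ Node.lf x θ ∈ l ∧
      (if u.1 then Node.eq v x ∈ l else (Node.neq v x ∈ l ∨ v.1 ≠ x.1))

lemma witP_mono {u ψ l t} (h : WitP u ψ l) : WitP u ψ (l ++ t) := by
  cases ψ with
  | atom n => trivial
  | not χ => obtain ⟨v, hv, hp⟩ := h; exact ⟨v, List.mem_append_left _ hv, hp⟩
  | imp χ θ =>
      obtain ⟨v, x, hv, hx, hp⟩ := h
      exact ⟨v, x, List.mem_append_left _ hv, List.mem_append_left _ hx, hp⟩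
  | idn χ θ =>
      obtain ⟨v, x, hv, hx, hp⟩ := h
      refine ⟨v, x, List.mem_append_left _ hv, List.mem_append_left _ hx, ?_⟩
      by_cases hu : u.1 = true
      · simp only [hu, if_true] at hp ⊢; exact List.mem_append_left _ hp
      · simp only [Bool.not_eq_true] at hu
        simp only [hu] at hp ⊢
        rcases hp with hp | hp
        · exact Or.inl (List.mem_append_left _ hp)
        · exact Or.inr hp

/-- The master invariant maintained along every `ExtendUB`-branch. -/
def BInv (φ : SCIForm) (l : List Node) (E : Set (Label × SCIForm)) : Prop :=
  (∀ w ψ, (w, ψ) ∈ E → IsUrfather w ψ l) ∧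
  (∀ w ψ, Node.lf w ψ ∈ l → ψ ∈ subf φ) ∧
  ((lfL l).length ≤ 1 + ∑ ψ ∈ EF φ E, ar ψ) ∧
  (∀ w v, Node.eq w v ∈ l → w ∈ lfL l ∧ v ∈ lfL l) ∧
  (∀ w ψ, (w, ψ) ∈ E → WitP w ψ l)

lemma inv_init (φ : SCIForm) (w : Label) : BInv φ [Node.lf w φ] ∅ := by
  refine ⟨by simp, ?_, ?_, by simp, by simp⟩
  · intro w' ψ h
    simp at h
    rw [h.2]; exact mem_subf_self φ
  · simp [lfL]

lemma EF_insert {φ : SCIForm} {E : Set (Label × SCIForm)} {l : List Node}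
    {w : Label} {ψ : SCIForm}
    (hI1 : ∀ w' ψ', (w', ψ') ∈ E → IsUrfather w' ψ' l)
    (hE : (w, ψ) ∉ E) (hUrf : IsUrfather w ψ l) (hmem : ψ ∈ subf φ) :
    EF φ (insert (w, ψ) E) = insert ψ (EF φ E) ∧ ψ ∉ EF φ E := by
  classical
  constructor
  · ext χ
    simp only [EF, Finset.mem_filter, Finset.mem_insert]
    constructor
    · rintro ⟨hχ, w', hw'⟩
      rcases Set.mem_insert_iff.1 hw' with hw' | hw'
      · left; exact (Prod.ext_iff.1 hw').2
      · right; exact ⟨hχ, w', hw'⟩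
    · rintro (rfl | ⟨hχ, w', hw'⟩)
      · exact ⟨hmem, w, Set.mem_insert _ _⟩
      · exact ⟨hχ, w', Set.mem_insert_of_mem _ hw'⟩
  · intro hmem'
    simp only [EF, Finset.mem_filter] at hmem'
    obtain ⟨-, w', hw'⟩ := hmem'
    have := urfather_unique hUrf (hI1 w' ψ hw')
    exact hE (this ▸ hw')

/-- generic invariant preservation for decomposition rules -/
lemma inv_decomp {φ : SCIForm} {l : List Node} {E : Set (Label × SCIForm)}
    {w : Label} {ψ : SCIForm} {t : List Node}
    (hI : BInv φ l E) (hlf : Node.lf w ψ ∈ l) (hE : (w, ψ) ∉ E)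
    (hUrf : IsUrfather w ψ l)
    (hlen : (lfL t).length = ar ψ)
    (hsub : ∀ v χ, Node.lf v χ ∈ t → χ ∈ subf ψ)
    (heq : ∀ a b, Node.eq a b ∈ t → a ∈ lfL t ∧ b ∈ lfL t)
    (hwit : WitP w ψ (l ++ t)) :
    BInv φ (l ++ t) (insert (w, ψ) E) := by
  obtain ⟨h1, h2, h3, h4, h5⟩ := hI
  have hmem : ψ ∈ subf φ := h2 w ψ hlf
  obtain ⟨hEF, hnew⟩ := EF_insert h1 hE hUrf hmem
  refine ⟨?_, ?_, ?_, ?_, ?_⟩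
  · intro w' ψ' h
    rcases Set.mem_insert_iff.1 h with h | h
    · obtain ⟨ha, hb⟩ := Prod.ext_iff.1 h
      dsimp at ha hb; subst ha; subst hb
      exact urfather_append hUrf
    · exact urfather_append (h1 w' ψ' h)
  · intro w' ψ' h
    rcases List.mem_append.1 h with h | h
    · exact h2 w' ψ' h
    · exact subf_trans hmem (hsub w' ψ' h)
  · rw [hEF, Finset.sum_insert hnew, lfL_append, List.length_append, hlen]
    omega
  · intro a b hab
    rcases List.mem_append.1 hab with hab | hab
    · obtain ⟨ha, hb⟩ := h4 a b hab
      rw [lfL_append]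
      exact ⟨List.mem_append_left _ ha, List.mem_append_left _ hb⟩
    · obtain ⟨ha, hb⟩ := heq a b hab
      rw [lfL_append]
      exact ⟨List.mem_append_right _ ha, List.mem_append_right _ hb⟩
  · intro w' ψ' h
    rcases Set.mem_insert_iff.1 h with h | h
    · obtain ⟨ha, hb⟩ := Prod.ext_iff.1 h
      dsimp at ha hb; subst ha; subst hb; exact hwit
    · exact witP_mono (h5 w' ψ' h)

/-- generic invariant preservation for equality rules -/
lemma inv_eqrule {φ : SCIForm} {l : List Node} {E : Set (Label × SCIForm)}
    {a b : Label} (hI : BInv φ l E) (ha : a ∈ lfL l) (hb : b ∈ lfL l) :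
    BInv φ (l ++ [Node.eq a b]) E := by
  obtain ⟨h1, h2, h3, h4, h5⟩ := hI
  refine ⟨?_, ?_, ?_, ?_, ?_⟩
  · intro w ψ h; exact urfather_append (h1 w ψ h)
  · intro w ψ h
    rcases List.mem_append.1 h with h | h
    · exact h2 w ψ h
    · simp at h
  · rw [lfL_append, lfL_single_eq]; simpa using h3
  · intro x y hxy
    rw [lfL_append, lfL_single_eq, List.append_nil]
    rcases List.mem_append.1 hxy with hxy | hxy
    · exact h4 x y hxy
    · simp at hxy
      exact ⟨hxy.1 ▸ ha, hxy.2 ▸ hb⟩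
  · intro w ψ h; exact witP_mono (h5 w ψ h)

lemma inv_botrule {φ : SCIForm} {l : List Node} {E : Set (Label × SCIForm)}
    (hI : BInv φ l E) : BInv φ (l ++ [Node.bot]) E := by
  obtain ⟨h1, h2, h3, h4, h5⟩ := hI
  refine ⟨?_, ?_, ?_, ?_, ?_⟩
  · intro w ψ h; exact urfather_append (h1 w ψ h)
  · intro w ψ h
    rcases List.mem_append.1 h with h | h
    · exact h2 w ψ h
    · simp at h
  · rw [lfL_append, lfL_single_bot]; simpa using h3
  · intro x y hxy
    rw [lfL_append, lfL_single_bot, List.append_nil]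
    rcases List.mem_append.1 hxy with hxy | hxy
    · exact h4 x y hxy
    · simp at hxy
  · intro w ψ h; exact witP_mono (h5 w ψ h)

lemma posL_eq {w : Label} (h : posL w) : w.1 = true := h
lemma negL_eq {w : Label} (h : negL w) : w.1 = false := h

lemma inv_step {φ : SCIForm} {l : List Node} {E : Set (Label × SCIForm)}
    {l' : List Node} {E' : Set (Label × SCIForm)}
    (h : ExtendUB l E l' E') (hI : BInv φ l E) : BInv φ l' E' := by
  cases h with
  | negP w v ψ hb hw hlf hE hUrf hv hfr =>
      refine inv_decomp hI hlf hE hUrf (by simp [lfL, ar]) ?_ (by simp) ?_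
      · intro v' χ h; simp at h
        rw [h.2]; simp [subf, mem_subf_self]
      · exact ⟨v, by simp, by simp [negL_eq hv, posL_eq hw]⟩
  | negN w v ψ hb hw hlf hE hUrf hv hfr =>
      refine inv_decomp hI hlf hE hUrf (by simp [lfL, ar]) ?_ (by simp) ?_
      · intro v' χ h; simp at h
        rw [h.2]; simp [subf, mem_subf_self]
      · exact ⟨v, by simp, by simp [posL_eq hv, negL_eq hw]⟩
  | impP1 w v u ψ χ hb hw hlf hE hUrf hv hu hne hfv hfu =>
      refine inv_decomp hI hlf hE hUrf (by simp [lfL, ar]) ?_ (by simp) ?_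
      · intro v' χ' h; simp at h
        rcases h with ⟨-, h⟩ | ⟨-, h⟩ <;> rw [h] <;> simp [subf, mem_subf_self]
      · exact ⟨v, u, by simp, by simp, by
          simp [posL_eq hw, negL_eq hv, negL_eq hu]⟩
  | impP2 w v u ψ χ hb hw hlf hE hUrf hv hu hne hfv hfu =>
      refine inv_decomp hI hlf hE hUrf (by simp [lfL, ar]) ?_ (by simp) ?_
      · intro v' χ' h; simp at h
        rcases h with ⟨-, h⟩ | ⟨-, h⟩ <;> rw [h] <;> simp [subf, mem_subf_self]
      · exact ⟨v, u, by simp, by simp, by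
          simp [posL_eq hw, negL_eq hv, posL_eq hu]⟩
  | impP3 w v u ψ χ hb hw hlf hE hUrf hv hu hne hfv hfu =>
      refine inv_decomp hI hlf hE hUrf (by simp [lfL, ar]) ?_ (by simp) ?_
      · intro v' χ' h; simp at h
        rcases h with ⟨-, h⟩ | ⟨-, h⟩ <;> rw [h] <;> simp [subf, mem_subf_self]
      · exact ⟨v, u, by simp, by simp, by
          simp [posL_eq hw, posL_eq hv, posL_eq hu]⟩
  | impN w v u ψ χ hb hw hlf hE hUrf hv hu hne hfv hfu =>
      refine inv_decomp hI hlf hE hUrf (by simp [lfL, ar]) ?_ (by simp) ?_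
      · intro v' χ' h; simp at h
        rcases h with ⟨-, h⟩ | ⟨-, h⟩ <;> rw [h] <;> simp [subf, mem_subf_self]
      · exact ⟨v, u, by simp, by simp, by
          simp [negL_eq hw, posL_eq hv, negL_eq hu]⟩
  | idnP1 w v u ψ χ hb hw hlf hE hUrf hv hu hne hfv hfu =>
      refine inv_decomp hI hlf hE hUrf (by simp [lfL, ar]) ?_ ?_ ?_
      · intro v' χ' h; simp at h
        rcases h with ⟨-, h⟩ | ⟨-, h⟩ <;> rw [h] <;> simp [subf, mem_subf_self]
      · intro a b hab; simp at hab
        rw [hab.1, hab.2]; simp [lfL]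
      · exact ⟨v, u, by simp, by simp, by simp [posL_eq hw]⟩
  | idnP2 w v u ψ χ hb hw hlf hE hUrf hv hu hne hfv hfu =>
      refine inv_decomp hI hlf hE hUrf (by simp [lfL, ar]) ?_ ?_ ?_
      · intro v' χ' h; simp at h
        rcases h with ⟨-, h⟩ | ⟨-, h⟩ <;> rw [h] <;> simp [subf, mem_subf_self]
      · intro a b hab; simp at hab
        rw [hab.1, hab.2]; simp [lfL]
      · exact ⟨v, u, by simp, by simp, by simp [posL_eq hw]⟩
  | idnN1 w v u ψ χ hb hw hlf hE hUrf hv hu hne hfv hfu =>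
      refine inv_decomp hI hlf hE hUrf (by simp [lfL, ar]) ?_ (by simp) ?_
      · intro v' χ' h; simp at h
        rcases h with ⟨-, h⟩ | ⟨-, h⟩ <;> rw [h] <;> simp [subf, mem_subf_self]
      · exact ⟨v, u, by simp, by simp, by simp [negL_eq hw]⟩
  | idnN2 w v u ψ χ hb hw hlf hE hUrf hv hu hne hfv hfu =>
      refine inv_decomp hI hlf hE hUrf (by simp [lfL, ar]) ?_ (by simp) ?_
      · intro v' χ' h; simp at h
        rcases h with ⟨-, h⟩ | ⟨-, h⟩ <;> rw [h] <;> simp [subf, mem_subf_self]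
      · refine ⟨v, u, by simp, by simp, ?_⟩
        simp only [negL_eq hw, if_false, Bool.false_eq_true]
        exact Or.inr (by simp [posL_eq hv, negL_eq hu])
  | idnN3 w v u ψ χ hb hw hlf hE hUrf hv hu hne hfv hfu =>
      refine inv_decomp hI hlf hE hUrf (by simp [lfL, ar]) ?_ (by simp) ?_
      · intro v' χ' h; simp at h
        rcases h with ⟨-, h⟩ | ⟨-, h⟩ <;> rw [h] <;> simp [subf, mem_subf_self]
      · refine ⟨v, u, by simp, by simp, ?_⟩
        simp only [negL_eq hw, if_false, Bool.false_eq_true]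
        exact Or.inr (by simp [negL_eq hv, posL_eq hu])
  | idnN4 w v u ψ χ hb hw hlf hE hUrf hv hu hne hfv hfu =>
      refine inv_decomp hI hlf hE hUrf (by simp [lfL, ar]) ?_ (by simp) ?_
      · intro v' χ' h; simp at h
        rcases h with ⟨-, h⟩ | ⟨-, h⟩ <;> rw [h] <;> simp [subf, mem_subf_self]
      · refine ⟨v, u, by simp, by simp, ?_⟩
        simp only [negL_eq hw, if_false, Bool.false_eq_true]
        exact Or.inl (by simp)
  | eqNeg w v u y ψ χ hb h1 h2 h3 h4 h5 h6 =>
      exact inv_eqrule hI (mem_lfL h4) (mem_lfL h5)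
  | eqImp w v w' v' x z ψ χ θ ι hb h1 h2 h3 h4 h5 h6 h7 h8 h9 =>
      exact inv_eqrule hI (mem_lfL h7) (mem_lfL h8)
  | eqIdn w v w' v' x z ψ χ θ ι hb h1 h2 h3 h4 h5 h6 h7 h8 h9 =>
      exact inv_eqrule hI (mem_lfL h7) (mem_lfL h8)
  | ruleF w v ψ hb h1 h2 h3 =>
      exact inv_eqrule hI (mem_lfL h1) (mem_lfL h2)
  | ruleSym w v hb h1 h2 =>
      exact inv_eqrule hI (hI.2.2.2.1 w v h1).2 (hI.2.2.2.1 w v h1).1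
  | ruleTran w v u hb h1 h2 h3 =>
      exact inv_eqrule hI (hI.2.2.2.1 w v h1).1 (hI.2.2.2.1 v u h2).2
  | bot1 w v hb h1 h2 => exact inv_botrule hI
  | bot2 w v hb hw hv h1 => exact inv_botrule hI
/-! ### Section D: the counting measure -/

/-- number of rule applications recorded on a branch -/
noncomputable def cnt (φ : SCIForm) (l : List Node) (E : Set (Label × SCIForm)) : ℕ :=
  (EF φ E).card + (eqP l).toFinset.card + (if Node.bot ∈ l then 1 else 0)

lemma cnt_init (φ : SCIForm) (w : Label) : cnt φ [Node.lf w φ] ∅ = 0 := by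
  have h1 : EF φ (∅ : Set (Label × SCIForm)) = ∅ := by
    ext ψ; simp [EF]
  simp [cnt, h1, eqP]

lemma eqP_toFinset_mono {l t : List Node} :
    (eqP l).toFinset ⊆ (eqP (l ++ t)).toFinset := by
  intro x hx
  rw [List.mem_toFinset] at *
  rw [eqP_append]
  exact List.mem_append_left _ hx

lemma cnt_decomp {φ : SCIForm} {l : List Node} {E : Set (Label × SCIForm)}
    {w : Label} {ψ : SCIForm} {t : List Node}
    (hI : BInv φ l E) (hlf : Node.lf w ψ ∈ l) (hE : (w, ψ) ∉ E)
    (hUrf : IsUrfather w ψ l) (hbot : Node.bot ∉ t) :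
    cnt φ l E + 1 ≤ cnt φ (l ++ t) (insert (w, ψ) E) := by
  obtain ⟨hEF, hnew⟩ := EF_insert hI.1 hE hUrf (hI.2.1 w ψ hlf)
  have hc : (EF φ (insert (w, ψ) E)).card = (EF φ E).card + 1 := by
    rw [hEF, Finset.card_insert_of_notMem hnew]
  have hm := Finset.card_le_card (eqP_toFinset_mono (l := l) (t := t))
  have hbm : (if Node.bot ∈ l then 1 else 0) ≤ (if Node.bot ∈ l ++ t then (1:ℕ) else 0) := by
    by_cases h : Node.bot ∈ l
    · simp [h, List.mem_append_left _ h]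
    · simp [h]
  simp only [cnt, hc]
  omega

lemma cnt_eqrule {φ : SCIForm} {l : List Node} {E : Set (Label × SCIForm)}
    {a b : Label} (hnew : Node.eq a b ∉ l) :
    cnt φ l E + 1 ≤ cnt φ (l ++ [Node.eq a b]) E := by
  have h1 : eqP (l ++ [Node.eq a b]) = eqP l ++ [(a, b)] := by
    rw [eqP_append]; rfl
  have h2 : (a, b) ∉ (eqP l).toFinset := by
    rw [List.mem_toFinset, mem_eqP]; exact hnew
  have h3 : (eqP (l ++ [Node.eq a b])).toFinset = insert (a, b) (eqP l).toFinset := by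
    rw [h1, List.toFinset_append]
    ext x
    simp [or_comm]
  have hc : (eqP (l ++ [Node.eq a b])).toFinset.card = (eqP l).toFinset.card + 1 := by
    rw [h3, Finset.card_insert_of_notMem h2]
  have hbm : (if Node.bot ∈ l then 1 else 0) ≤
      (if Node.bot ∈ l ++ [Node.eq a b] then (1:ℕ) else 0) := by
    by_cases h : Node.bot ∈ l
    · simp [h, List.mem_append_left _ h]
    · simp [h]
  simp only [cnt, hc]
  omega

lemma cnt_botrule {φ : SCIForm} {l : List Node} {E : Set (Label × SCIForm)}
    (hbot : Node.bot ∉ l) :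
    cnt φ l E + 1 ≤ cnt φ (l ++ [Node.bot]) E := by
  have hm := Finset.card_le_card (eqP_toFinset_mono (l := l) (t := [Node.bot]))
  have h1 : (if Node.bot ∈ l then (1:ℕ) else 0) = 0 := by simp [hbot]
  have h2 : (if Node.bot ∈ l ++ [Node.bot] then (1:ℕ) else 0) = 1 := by simp
  simp only [cnt, h1, h2]
  omega

lemma cnt_step {φ : SCIForm} {l : List Node} {E : Set (Label × SCIForm)}
    {l' : List Node} {E' : Set (Label × SCIForm)}
    (h : ExtendUB l E l' E') (hI : BInv φ l E) : cnt φ l E + 1 ≤ cnt φ l' E' := by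
  cases h with
  | negP w v ψ hb hw hlf hE hUrf hv hfr => exact cnt_decomp hI hlf hE hUrf (by simp)
  | negN w v ψ hb hw hlf hE hUrf hv hfr => exact cnt_decomp hI hlf hE hUrf (by simp)
  | impP1 w v u ψ χ hb hw hlf hE hUrf hv hu hne hfv hfu =>
      exact cnt_decomp hI hlf hE hUrf (by simp)
  | impP2 w v u ψ χ hb hw hlf hE hUrf hv hu hne hfv hfu =>
      exact cnt_decomp hI hlf hE hUrf (by simp)
  | impP3 w v u ψ χ hb hw hlf hE hUrf hv hu hne hfv hfu =>
      exact cnt_decomp hI hlf hE hUrf (by simp)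
  | impN w v u ψ χ hb hw hlf hE hUrf hv hu hne hfv hfu =>
      exact cnt_decomp hI hlf hE hUrf (by simp)
  | idnP1 w v u ψ χ hb hw hlf hE hUrf hv hu hne hfv hfu =>
      exact cnt_decomp hI hlf hE hUrf (by simp)
  | idnP2 w v u ψ χ hb hw hlf hE hUrf hv hu hne hfv hfu =>
      exact cnt_decomp hI hlf hE hUrf (by simp)
  | idnN1 w v u ψ χ hb hw hlf hE hUrf hv hu hne hfv hfu =>
      exact cnt_decomp hI hlf hE hUrf (by simp)
  | idnN2 w v u ψ χ hb hw hlf hE hUrf hv hu hne hfv hfu =>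
      exact cnt_decomp hI hlf hE hUrf (by simp)
  | idnN3 w v u ψ χ hb hw hlf hE hUrf hv hu hne hfv hfu =>
      exact cnt_decomp hI hlf hE hUrf (by simp)
  | idnN4 w v u ψ χ hb hw hlf hE hUrf hv hu hne hfv hfu =>
      exact cnt_decomp hI hlf hE hUrf (by simp)
  | eqNeg w v u y ψ χ hb h1 h2 h3 h4 h5 h6 => exact cnt_eqrule h6
  | eqImp w v w' v' x z ψ χ θ ι hb h1 h2 h3 h4 h5 h6 h7 h8 h9 => exact cnt_eqrule h9
  | eqIdn w v w' v' x z ψ χ θ ι hb h1 h2 h3 h4 h5 h6 h7 h8 h9 => exact cnt_eqrule h9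
  | ruleF w v ψ hb h1 h2 h3 => exact cnt_eqrule h3
  | ruleSym w v hb h1 h2 => exact cnt_eqrule h2
  | ruleTran w v u hb h1 h2 h3 => exact cnt_eqrule h3
  | bot1 w v hb h1 h2 => exact cnt_botrule hb
  | bot2 w v hb hw hv h1 => exact cnt_botrule hb

lemma lfL_length_le {φ : SCIForm} {l : List Node} {E : Set (Label × SCIForm)}
    (hI : BInv φ l E) : (lfL l).length ≤ φ.size := by
  classical
  have h1 := hI.2.2.1
  have h2 : ∑ ψ ∈ EF φ E, ar ψ ≤ ∑ ψ ∈ subf φ, ar ψ :=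
    Finset.sum_le_sum_of_subset (Finset.filter_subset _ _)
  have h3 := sum_ar_subf φ
  omega

lemma cnt_le {φ : SCIForm} {l : List Node} {E : Set (Label × SCIForm)}
    (hI : BInv φ l E) : cnt φ l E ≤ φ.size + φ.size ^ 2 + 1 := by
  classical
  have hA : (EF φ E).card ≤ φ.size :=
    le_trans (Finset.card_le_card (Finset.filter_subset _ _)) (card_subf_le φ)
  have hsub : (eqP l).toFinset ⊆ (lfL l).toFinset ×ˢ (lfL l).toFinset := by
    intro x hx
    rw [List.mem_toFinset] at hx
    obtain ⟨a, b⟩ := x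
    have := hI.2.2.2.1 a b (mem_eqP.1 hx)
    rw [Finset.mem_product]
    exact ⟨List.mem_toFinset.2 this.1, List.mem_toFinset.2 this.2⟩
  have hB : (eqP l).toFinset.card ≤ φ.size ^ 2 := by
    have := Finset.card_le_card hsub
    rw [Finset.card_product] at this
    have hL : (lfL l).toFinset.card ≤ φ.size :=
      le_trans (lfL l).toFinset_card_le (lfL_length_le hI)
    calc (eqP l).toFinset.card ≤ (lfL l).toFinset.card * (lfL l).toFinset.card := this
    _ ≤ φ.size * φ.size := Nat.mul_le_mul hL hL
    _ = φ.size ^ 2 := (sq φ.size).symm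
  have hC : (if Node.bot ∈ l then (1:ℕ) else 0) ≤ 1 := by split <;> omega
  simp only [cnt]
  omega
/-! ### Section E: termination and saturation -/

lemma inv_chain {φ : SCIForm} {w : Label} {n : ℕ} {g : ℕ → List Node}
    {h : ℕ → Set (Label × SCIForm)}
    (h0 : g 0 = [Node.lf w φ]) (hE0 : h 0 = ∅)
    (hstep : ∀ i < n, ExtendUB (g i) (h i) (g (i + 1)) (h (i + 1))) :
    ∀ i ≤ n, BInv φ (g i) (h i) ∧ i ≤ cnt φ (g i) (h i) := by
  intro i
  induction i with
  | zero => intro _; rw [h0, hE0]; exact ⟨inv_init φ w, by simp [cnt_init]⟩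
  | succ j ih =>
      intro hj
      obtain ⟨hI, hc⟩ := ih (by omega)
      have hs := hstep j (by omega)
      exact ⟨inv_step hs hI, by have := cnt_step hs hI; omega⟩

/-- Part (iii): termination. -/
lemma part3 (φ : SCIForm) (w : Label) (n : ℕ) (g : ℕ → List Node)
    (h : ℕ → Set (Label × SCIForm))
    (h0 : g 0 = [Node.lf w φ]) (hE0 : h 0 = ∅)
    (hstep : ∀ i < n, ExtendUB (g i) (h i) (g (i + 1)) (h (i + 1))) :
    n ≤ SCIForm.size φ + SCIForm.size φ ^ 2 + 1 := by
  obtain ⟨hI, hc⟩ := inv_chain h0 hE0 hstep n le_rfl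
  have := cnt_le hI
  omega

/-- generic saturation: any persistent property can be driven to a saturated branch -/
lemma saturate (φ : SCIForm) (P : List Node → Set (Label × SCIForm) → Prop)
    (hP : ∀ l E, BInv φ l E → P l E → ∀ l' E', ExtendUB l E l' E' →
      ∃ l'' E'', ExtendUB l E l'' E'' ∧ P l'' E'') :
    ∀ (k : ℕ) (l : List Node) (E : Set (Label × SCIForm)), BInv φ l E → P l E →
      SCIForm.size φ + SCIForm.size φ ^ 2 + 1 ≤ cnt φ l E + k →
    ∃ (n : ℕ) (g : ℕ → List Node) (h : ℕ → Set (Label × SCIForm)),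
      g 0 = l ∧ h 0 = E ∧
      (∀ i < n, ExtendUB (g i) (h i) (g (i + 1)) (h (i + 1))) ∧
      P (g n) (h n) ∧ BInv φ (g n) (h n) ∧
      (∀ l' E', ¬ ExtendUB (g n) (h n) l' E') ∧ (∃ t, g n = l ++ t) := by
  intro k
  induction k with
  | zero =>
      intro l E hI hp hb
      refine ⟨0, fun _ => l, fun _ => E, rfl, rfl, by omega, hp, hI, ?_, ⟨[], by simp⟩⟩
      intro l' E' hstep
      have hstep2 : ExtendUB l E l' E' := hstep
      have hI' := inv_step hstep2 hI
      have := cnt_step hstep2 hI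
      have := cnt_le hI'
      omega
  | succ k ih =>
      intro l E hI hp hb
      by_cases hex : ∃ l' E', ExtendUB l E l' E'
      · obtain ⟨l₀, E₀, hstep₀⟩ := hex
        obtain ⟨l₁, E₁, hstep, hp₁⟩ := hP l E hI hp l₀ E₀ hstep₀
        have hI₁ := inv_step hstep hI
        have hc := cnt_step hstep hI
        obtain ⟨n, g, h, hg0, hh0, hsteps, hPn, hIn, hsat, t, ht⟩ :=
          ih l₁ E₁ hI₁ hp₁ (by omega)
        refine ⟨n + 1, fun i => match i with | 0 => l | j + 1 => g j,
          fun i => match i with | 0 => E | j + 1 => h j, rfl, rfl, ?_, hPn, hIn, hsat, ?_⟩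
        · intro i hi
          match i with
          | 0 => simpa [hg0, hh0] using hstep
          | j + 1 => exact hsteps j (by omega)
        · obtain ⟨t₀, ht₀⟩ := extend_prefix hstep
          exact ⟨t₀ ++ t, by simp [ht, ht₀]⟩
      · push_neg at hex
        exact ⟨0, fun _ => l, fun _ => E, rfl, rfl, by omega, hp, hI,
          fun l' E' h => hex l' E' h, ⟨[], by simp⟩⟩
/-! ### Section F: soundness (realizable branches) -/

/-- the branch is realized in the model `M` under valuation `V` -/
def RealB {U : Type} (M : SCIStruct U) (V : SCIForm → U) (l : List Node) : Prop :=
  ∃ ι : Label → U,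
    (∀ w ψ, Node.lf w ψ ∈ l → ι w = V ψ ∧ (w.1 = true ↔ V ψ ∈ M.D)) ∧
    (∀ w v, Node.eq w v ∈ l →
      ι w = ι v ∧ (∃ ψ, Node.lf w ψ ∈ l) ∧ (∃ ψ, Node.lf v ψ ∈ l)) ∧
    (∀ w v, Node.neq w v ∈ l →
      ι w ≠ ι v ∧ (∃ ψ, Node.lf w ψ ∈ l) ∧ (∃ ψ, Node.lf v ψ ∈ l)) ∧
    Node.bot ∉ l

lemma freshL_app {v : Label} {l : List Node} {u : Label} {χ : SCIForm}
    (h : freshL v l) (hne : v ≠ u) : freshL v (l ++ [Node.lf u χ]) := by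
  intro ψ hmem
  rcases List.mem_append.1 hmem with hm | hm
  · exact h ψ hm
  · simp at hm; exact hne hm.1

lemma real_bot_notmem {U : Type} {M : SCIStruct U} {V : SCIForm → U} {l : List Node}
    (h : RealB M V l) : Node.bot ∉ l := by
  obtain ⟨ι, -, -, -, hb⟩ := h
  exact hb

lemma real_ext1 {U : Type} {M : SCIStruct U} {V : SCIForm → U} {l : List Node}
    {v : Label} {χ : SCIForm}
    (hR : RealB M V l) (hfr : freshL v l) (hpol : v.1 = true ↔ V χ ∈ M.D) :
    RealB M V (l ++ [Node.lf v χ]) := by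
  obtain ⟨ι, h1, h2, h3, h4⟩ := hR
  refine ⟨Function.update ι v (V χ), ?_, ?_, ?_, by simp [h4]⟩
  · intro w ψ hm
    rcases List.mem_append.1 hm with hm | hm
    · have hne : w ≠ v := fun he => hfr ψ (he ▸ hm)
      rw [Function.update_of_ne hne]
      exact h1 w ψ hm
    · simp at hm
      obtain ⟨rfl, rfl⟩ := hm
      rw [Function.update_self]
      exact ⟨rfl, hpol⟩
  · intro w u hm
    rcases List.mem_append.1 hm with hm | hm
    · obtain ⟨hι, ⟨ψ1, hw⟩, ⟨ψ2, hu⟩⟩ := h2 w u hm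
      have hnw : w ≠ v := fun he => hfr ψ1 (he ▸ hw)
      have hnu : u ≠ v := fun he => hfr ψ2 (he ▸ hu)
      rw [Function.update_of_ne hnw, Function.update_of_ne hnu]
      exact ⟨hι, ⟨ψ1, List.mem_append_left _ hw⟩, ⟨ψ2, List.mem_append_left _ hu⟩⟩
    · simp at hm
  · intro w u hm
    rcases List.mem_append.1 hm with hm | hm
    · obtain ⟨hι, ⟨ψ1, hw⟩, ⟨ψ2, hu⟩⟩ := h3 w u hm
      have hnw : w ≠ v := fun he => hfr ψ1 (he ▸ hw)
      have hnu : u ≠ v := fun he => hfr ψ2 (he ▸ hu)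
      rw [Function.update_of_ne hnw, Function.update_of_ne hnu]
      exact ⟨hι, ⟨ψ1, List.mem_append_left _ hw⟩, ⟨ψ2, List.mem_append_left _ hu⟩⟩
    · simp at hm

lemma real_ext2 {U : Type} {M : SCIStruct U} {V : SCIForm → U} {l : List Node}
    {v u : Label} {χ θ : SCIForm}
    (hR : RealB M V l) (hfv : freshL v l) (hfu : freshL u l) (hvu : v ≠ u)
    (hpv : v.1 = true ↔ V χ ∈ M.D) (hpu : u.1 = true ↔ V θ ∈ M.D) :
    RealB M V (l ++ [Node.lf v χ, Node.lf u θ]) := by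
  have h1 := real_ext1 hR hfv hpv
  have h2 := real_ext1 h1 (freshL_app hfu (Ne.symm hvu)) hpu
  have : l ++ [Node.lf v χ, Node.lf u θ] = (l ++ [Node.lf v χ]) ++ [Node.lf u θ] := by
    simp
  rw [this]; exact h2

lemma real_ext_eq {U : Type} {M : SCIStruct U} {V : SCIForm → U} {l : List Node}
    {a b : Label} {ψa ψb : SCIForm}
    (hR : RealB M V l) (ha : Node.lf a ψa ∈ l) (hb : Node.lf b ψb ∈ l)
    (hV : V ψa = V ψb) : RealB M V (l ++ [Node.eq a b]) := by
  obtain ⟨ι, h1, h2, h3, h4⟩ := hR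
  refine ⟨ι, ?_, ?_, ?_, by simp [h4]⟩
  · intro w ψ hm
    rcases List.mem_append.1 hm with hm | hm
    · exact h1 w ψ hm
    · simp at hm
  · intro w u hm
    rcases List.mem_append.1 hm with hm | hm
    · obtain ⟨hι, ⟨ψ1, hw⟩, ⟨ψ2, hu⟩⟩ := h2 w u hm
      exact ⟨hι, ⟨ψ1, List.mem_append_left _ hw⟩, ⟨ψ2, List.mem_append_left _ hu⟩⟩
    · simp at hm
      rw [hm.1, hm.2, (h1 a ψa ha).1, (h1 b ψb hb).1, hV]
      exact ⟨rfl, ⟨ψa, List.mem_append_left _ ha⟩, ⟨ψb, List.mem_append_left _ hb⟩⟩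
  · intro w u hm
    rcases List.mem_append.1 hm with hm | hm
    · obtain ⟨hι, ⟨ψ1, hw⟩, ⟨ψ2, hu⟩⟩ := h3 w u hm
      exact ⟨hι, ⟨ψ1, List.mem_append_left _ hw⟩, ⟨ψ2, List.mem_append_left _ hu⟩⟩
    · simp at hm

lemma real_ext_neq {U : Type} {M : SCIStruct U} {V : SCIForm → U} {l : List Node}
    {a b : Label} {ψa ψb : SCIForm}
    (hR : RealB M V l) (ha : Node.lf a ψa ∈ l) (hb : Node.lf b ψb ∈ l)
    (hV : V ψa ≠ V ψb) : RealB M V (l ++ [Node.neq a b]) := by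
  obtain ⟨ι, h1, h2, h3, h4⟩ := hR
  refine ⟨ι, ?_, ?_, ?_, by simp [h4]⟩
  · intro w ψ hm
    rcases List.mem_append.1 hm with hm | hm
    · exact h1 w ψ hm
    · simp at hm
  · intro w u hm
    rcases List.mem_append.1 hm with hm | hm
    · obtain ⟨hι, ⟨ψ1, hw⟩, ⟨ψ2, hu⟩⟩ := h2 w u hm
      exact ⟨hι, ⟨ψ1, List.mem_append_left _ hw⟩, ⟨ψ2, List.mem_append_left _ hu⟩⟩
    · simp at hm
  · intro w u hm
    rcases List.mem_append.1 hm with hm | hm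
    · obtain ⟨hι, ⟨ψ1, hw⟩, ⟨ψ2, hu⟩⟩ := h3 w u hm
      exact ⟨hι, ⟨ψ1, List.mem_append_left _ hw⟩, ⟨ψ2, List.mem_append_left _ hu⟩⟩
    · simp at hm
      rw [hm.1, hm.2, (h1 a ψa ha).1, (h1 b ψb hb).1]
      exact ⟨hV, ⟨ψa, List.mem_append_left _ ha⟩, ⟨ψb, List.mem_append_left _ hb⟩⟩

lemma real_pol {U : Type} {M : SCIStruct U} {V : SCIForm → U} {l : List Node}
    {w : Label} {ψ : SCIForm} (hR : RealB M V l) (h : Node.lf w ψ ∈ l) :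
    w.1 = true ↔ V ψ ∈ M.D := by
  obtain ⟨ι, h1, -, -, -⟩ := hR
  exact (h1 w ψ h).2

lemma real_veq {U : Type} {M : SCIStruct U} {V : SCIForm → U} {l : List Node}
    {a b : Label} {ψa ψb : SCIForm}
    (hR : RealB M V l) (ha : Node.lf a ψa ∈ l) (hb : Node.lf b ψb ∈ l)
    (heq : Node.eq a b ∈ l) : V ψa = V ψb := by
  obtain ⟨ι, h1, h2, -, -⟩ := hR
  rw [← (h1 a ψa ha).1, ← (h1 b ψb hb).1]
  exact (h2 a b heq).1

/-- two fresh labels of prescribed polarities -/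
lemma fresh_pair (l : List Node) (b1 b2 : Bool) :
    ∃ v u : Label, v.1 = b1 ∧ u.1 = b2 ∧ v ≠ u ∧ freshL v l ∧ freshL u l := by
  refine ⟨(b1, lbound l), (b2, lbound l + 1), rfl, rfl, ?_,
    fresh_of_ge le_rfl b1, fresh_of_ge (by omega) b2⟩
  intro h
  have := congrArg Prod.snd h
  simp at this
/-! ### Section G: soundness of the rules -/

section Sound
variable {U : Type} {M : SCIStruct U} {V : SCIForm → U}

lemma sound_impP {l : List Node} {E : Set (Label × SCIForm)} {w : Label} {χ θ : SCIForm}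
    (hM : IsSCIModel M) (hV : IsValuation M V) (hR : RealB M V l)
    (hb : Node.bot ∉ l) (hw : posL w) (hlf : Node.lf w (SCIForm.imp χ θ) ∈ l)
    (hE : (w, SCIForm.imp χ θ) ∉ E) (hUrf : IsUrfather w (SCIForm.imp χ θ) l) :
    ∃ l'' E'', ExtendUB l E l'' E'' ∧ RealB M V l'' := by
  have hd : V (SCIForm.imp χ θ) ∈ M.D := (real_pol hR hlf).1 hw
  rw [hV.2.1, hM.2.2.2.1] at hd
  by_cases hχ : V χ ∈ M.D <;> by_cases hθ : V θ ∈ M.D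
  · obtain ⟨v, u, hv, hu, hvu, hfv, hfu⟩ := fresh_pair l true true
    exact ⟨_, _, ExtendUB.impP3 l E w v u χ θ hb hw hlf hE hUrf hv hu hvu hfv hfu,
      real_ext2 hR hfv hfu hvu (by simp [hv, hχ]) (by simp [hu, hθ])⟩
  · rcases hd with hd | hd
    · exact absurd hχ hd
    · exact absurd hd hθ
  · obtain ⟨v, u, hv, hu, hvu, hfv, hfu⟩ := fresh_pair l false true
    exact ⟨_, _, ExtendUB.impP2 l E w v u χ θ hb hw hlf hE hUrf hv hu hvu hfv hfu,
      real_ext2 hR hfv hfu hvu (by simp [hv, hχ]) (by simp [hu, hθ])⟩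
  · obtain ⟨v, u, hv, hu, hvu, hfv, hfu⟩ := fresh_pair l false false
    exact ⟨_, _, ExtendUB.impP1 l E w v u χ θ hb hw hlf hE hUrf hv hu hvu hfv hfu,
      real_ext2 hR hfv hfu hvu (by simp [hv, hχ]) (by simp [hu, hθ])⟩

lemma sound_idnP {l : List Node} {E : Set (Label × SCIForm)} {w : Label} {χ θ : SCIForm}
    (hM : IsSCIModel M) (hV : IsValuation M V) (hR : RealB M V l)
    (hb : Node.bot ∉ l) (hw : posL w) (hlf : Node.lf w (SCIForm.idn χ θ) ∈ l)
    (hE : (w, SCIForm.idn χ θ) ∉ E) (hUrf : IsUrfather w (SCIForm.idn χ θ) l) :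
    ∃ l'' E'', ExtendUB l E l'' E'' ∧ RealB M V l'' := by
  have hd : V (SCIForm.idn χ θ) ∈ M.D := (real_pol hR hlf).1 hw
  rw [hV.2.2, hM.2.2.2.2] at hd
  have hassoc : ∀ (a b c : Node), l ++ [a, b, c] = (l ++ [a, b]) ++ [c] := by simp
  by_cases hχ : V χ ∈ M.D
  · obtain ⟨v, u, hv, hu, hvu, hfv, hfu⟩ := fresh_pair l true true
    refine ⟨_, _, ExtendUB.idnP1 l E w v u χ θ hb hw hlf hE hUrf hv hu hvu hfv hfu, ?_⟩
    rw [hassoc]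
    exact real_ext_eq (real_ext2 hR hfv hfu hvu (by simp [hv, hχ]) (by simp [hu, hd ▸ hχ]))
      (by simp) (by simp) hd
  · obtain ⟨v, u, hv, hu, hvu, hfv, hfu⟩ := fresh_pair l false false
    refine ⟨_, _, ExtendUB.idnP2 l E w v u χ θ hb hw hlf hE hUrf hv hu hvu hfv hfu, ?_⟩
    rw [hassoc]
    exact real_ext_eq (real_ext2 hR hfv hfu hvu (by simp [hv, hχ]) (by simp [hu, hd ▸ hχ]))
      (by simp) (by simp) hd

lemma sound_idnN {l : List Node} {E : Set (Label × SCIForm)} {w : Label} {χ θ : SCIForm}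
    (hM : IsSCIModel M) (hV : IsValuation M V) (hR : RealB M V l)
    (hb : Node.bot ∉ l) (hw : negL w) (hlf : Node.lf w (SCIForm.idn χ θ) ∈ l)
    (hE : (w, SCIForm.idn χ θ) ∉ E) (hUrf : IsUrfather w (SCIForm.idn χ θ) l) :
    ∃ l'' E'', ExtendUB l E l'' E'' ∧ RealB M V l'' := by
  have hd : V (SCIForm.idn χ θ) ∉ M.D := fun hc =>
    by simpa [negL_eq hw] using (real_pol hR hlf).2 hc
  rw [hV.2.2, hM.2.2.2.2] at hd
  have hassoc : ∀ (a b c : Node), l ++ [a, b, c] = (l ++ [a, b]) ++ [c] := by simp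
  by_cases hχ : V χ ∈ M.D <;> by_cases hθ : V θ ∈ M.D
  · obtain ⟨v, u, hv, hu, hvu, hfv, hfu⟩ := fresh_pair l true true
    refine ⟨_, _, ExtendUB.idnN1 l E w v u χ θ hb hw hlf hE hUrf hv hu hvu hfv hfu, ?_⟩
    rw [hassoc]
    exact real_ext_neq (real_ext2 hR hfv hfu hvu (by simp [hv, hχ]) (by simp [hu, hθ]))
      (by simp) (by simp) hd
  · obtain ⟨v, u, hv, hu, hvu, hfv, hfu⟩ := fresh_pair l true false
    exact ⟨_, _, ExtendUB.idnN2 l E w v u χ θ hb hw hlf hE hUrf hv hu hvu hfv hfu,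
      real_ext2 hR hfv hfu hvu (by simp [hv, hχ]) (by simp [hu, hθ])⟩
  · obtain ⟨v, u, hv, hu, hvu, hfv, hfu⟩ := fresh_pair l false true
    exact ⟨_, _, ExtendUB.idnN3 l E w v u χ θ hb hw hlf hE hUrf hv hu hvu hfv hfu,
      real_ext2 hR hfv hfu hvu (by simp [hv, hχ]) (by simp [hu, hθ])⟩
  · obtain ⟨v, u, hv, hu, hvu, hfv, hfu⟩ := fresh_pair l false false
    refine ⟨_, _, ExtendUB.idnN4 l E w v u χ θ hb hw hlf hE hUrf hv hu hvu hfv hfu, ?_⟩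
    rw [hassoc]
    exact real_ext_neq (real_ext2 hR hfv hfu hvu (by simp [hv, hχ]) (by simp [hu, hθ]))
      (by simp) (by simp) hd

lemma real_step {l : List Node} {E : Set (Label × SCIForm)} {l' : List Node}
    {E' : Set (Label × SCIForm)}
    (hM : IsSCIModel M) (hV : IsValuation M V) (hR : RealB M V l)
    (h : ExtendUB l E l' E') :
    ∃ l'' E'', ExtendUB l E l'' E'' ∧ RealB M V l'' := by
  cases h with
  | negP w v χ hb hw hlf hE hUrf hv hfr =>
      have hd : V (SCIForm.not χ) ∈ M.D := (real_pol hR hlf).1 hw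
      rw [hV.1, hM.2.2.1] at hd
      exact ⟨_, _, ExtendUB.negP l E w v χ hb hw hlf hE hUrf hv hfr,
        real_ext1 hR hfr (by simp [negL_eq hv, hd])⟩
  | negN w v χ hb hw hlf hE hUrf hv hfr =>
      have hd : V (SCIForm.not χ) ∉ M.D := fun hc =>
        by simpa [negL_eq hw] using (real_pol hR hlf).2 hc
      rw [hV.1, hM.2.2.1] at hd
      have hd' : V χ ∈ M.D := not_not.1 hd
      exact ⟨_, _, ExtendUB.negN l E w v χ hb hw hlf hE hUrf hv hfr,
        real_ext1 hR hfr (by simp [posL_eq hv, hd'])⟩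
  | impP1 w v u χ θ hb hw hlf hE hUrf hv hu hvu hfv hfu =>
      exact sound_impP hM hV hR hb hw hlf hE hUrf
  | impP2 w v u χ θ hb hw hlf hE hUrf hv hu hvu hfv hfu =>
      exact sound_impP hM hV hR hb hw hlf hE hUrf
  | impP3 w v u χ θ hb hw hlf hE hUrf hv hu hvu hfv hfu =>
      exact sound_impP hM hV hR hb hw hlf hE hUrf
  | impN w v u χ θ hb hw hlf hE hUrf hv hu hvu hfv hfu =>
      have hd : V (SCIForm.imp χ θ) ∉ M.D := fun hc =>
        by simpa [negL_eq hw] using (real_pol hR hlf).2 hc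
      rw [hV.2.1, hM.2.2.2.1] at hd
      push_neg at hd
      exact ⟨_, _, ExtendUB.impN l E w v u χ θ hb hw hlf hE hUrf hv hu hvu hfv hfu,
        real_ext2 hR hfv hfu hvu (by simp [posL_eq hv, hd.1])
          (by simp [negL_eq hu, hd.2])⟩
  | idnP1 w v u χ θ hb hw hlf hE hUrf hv hu hvu hfv hfu =>
      exact sound_idnP hM hV hR hb hw hlf hE hUrf
  | idnP2 w v u χ θ hb hw hlf hE hUrf hv hu hvu hfv hfu =>
      exact sound_idnP hM hV hR hb hw hlf hE hUrf
  | idnN1 w v u χ θ hb hw hlf hE hUrf hv hu hvu hfv hfu =>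
      exact sound_idnN hM hV hR hb hw hlf hE hUrf
  | idnN2 w v u χ θ hb hw hlf hE hUrf hv hu hvu hfv hfu =>
      exact sound_idnN hM hV hR hb hw hlf hE hUrf
  | idnN3 w v u χ θ hb hw hlf hE hUrf hv hu hvu hfv hfu =>
      exact sound_idnN hM hV hR hb hw hlf hE hUrf
  | idnN4 w v u χ θ hb hw hlf hE hUrf hv hu hvu hfv hfu =>
      exact sound_idnN hM hV hR hb hw hlf hE hUrf
  | eqNeg w v u y χ θ hb h1 h2 h3 h4 h5 h6 =>
      have hveq : V χ = V θ := real_veq hR h1 h2 h3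
      refine ⟨_, _, ExtendUB.eqNeg l E w v u y χ θ hb h1 h2 h3 h4 h5 h6, ?_⟩
      exact real_ext_eq hR h4 h5 (by rw [hV.1, hV.1, hveq])
  | eqImp w v w' v' x z χ θ χ' θ' hb h1 h2 h3 h4 h5 h6 h7 h8 h9 =>
      have e1 : V χ = V θ := real_veq hR h1 h2 h3
      have e2 : V χ' = V θ' := real_veq hR h4 h5 h6
      refine ⟨_, _, ExtendUB.eqImp l E w v w' v' x z χ θ χ' θ' hb h1 h2 h3 h4 h5 h6 h7 h8 h9, ?_⟩
      exact real_ext_eq hR h7 h8 (by rw [hV.2.1, hV.2.1, e1, e2])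
  | eqIdn w v w' v' x z χ θ χ' θ' hb h1 h2 h3 h4 h5 h6 h7 h8 h9 =>
      have e1 : V χ = V θ := real_veq hR h1 h2 h3
      have e2 : V χ' = V θ' := real_veq hR h4 h5 h6
      refine ⟨_, _, ExtendUB.eqIdn l E w v w' v' x z χ θ χ' θ' hb h1 h2 h3 h4 h5 h6 h7 h8 h9, ?_⟩
      exact real_ext_eq hR h7 h8 (by rw [hV.2.2, hV.2.2, e1, e2])
  | ruleF w v χ hb h1 h2 h3 =>
      exact ⟨_, _, ExtendUB.ruleF l E w v χ hb h1 h2 h3, real_ext_eq hR h1 h2 rfl⟩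
  | ruleSym w v hb h1 h2 =>
      obtain ⟨ι, hr1, hr2, hr3, hr4⟩ := hR
      obtain ⟨hι, ⟨ψ1, hw⟩, ⟨ψ2, hv⟩⟩ := hr2 w v h1
      refine ⟨_, _, ExtendUB.ruleSym l E w v hb h1 h2, ?_⟩
      refine real_ext_eq ⟨ι, hr1, hr2, hr3, hr4⟩ hv hw ?_
      rw [← (hr1 w ψ1 hw).1, ← (hr1 v ψ2 hv).1, hι]
  | ruleTran w v u hb h1 h2 h3 =>
      obtain ⟨ι, hr1, hr2, hr3, hr4⟩ := hR
      obtain ⟨hι1, ⟨ψ1, hw⟩, ⟨ψ2, hv⟩⟩ := hr2 w v h1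
      obtain ⟨hι2, -, ⟨ψ3, hu⟩⟩ := hr2 v u h2
      refine ⟨_, _, ExtendUB.ruleTran l E w v u hb h1 h2 h3, ?_⟩
      refine real_ext_eq ⟨ι, hr1, hr2, hr3, hr4⟩ hw hu ?_
      rw [← (hr1 w ψ1 hw).1, ← (hr1 u ψ3 hu).1, hι1, hι2]
  | bot1 w v hb h1 h2 =>
      obtain ⟨ι, hr1, hr2, hr3, hr4⟩ := hR
      exact absurd (hr2 w v h1).1 (hr3 w v h2).1
  | bot2 w v hb hw hv h1 =>
      obtain ⟨ι, hr1, hr2, hr3, hr4⟩ := hR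
      obtain ⟨hι, ⟨ψ1, hwm⟩, ⟨ψ2, hvm⟩⟩ := hr2 w v h1
      have d1 : V ψ1 ∈ M.D := (hr1 w ψ1 hwm).2.1 (posL_eq hw)
      have d2 : V ψ2 ∉ M.D := fun hc =>
        by simpa [negL_eq hv] using (hr1 v ψ2 hvm).2.2 hc
      have : V ψ1 = V ψ2 := by
        rw [← (hr1 w ψ1 hwm).1, ← (hr1 v ψ2 hvm).1, hι]
      exact absurd (this ▸ d1) d2

end Sound
/-! ### Section H: part (i), and persistence of openness -/

lemma part1 (φ : SCIForm) (hsat : SCISatisfiable φ) (w : Label) (hw : posL w) :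
    ∃ (n : ℕ) (g : ℕ → List Node) (h : ℕ → Set (Label × SCIForm)),
      g 0 = [Node.lf w φ] ∧ h 0 = ∅ ∧
      (∀ i < n, ExtendUB (g i) (h i) (g (i + 1)) (h (i + 1))) ∧
      Node.bot ∉ g n ∧ (∀ l' E', ¬ ExtendUB (g n) (h n) l' E') := by
  obtain ⟨U, M, V, hM, hV, hD⟩ := hsat
  have hinit : RealB M V [Node.lf w φ] := by
    refine ⟨fun _ => V φ, ?_, by simp, by simp, by simp⟩
    intro w' ψ' hm
    simp at hm
    rw [hm.2]
    exact ⟨rfl, by rw [hm.1]; exact ⟨fun _ => hD, fun _ => posL_eq hw⟩⟩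
  obtain ⟨n, g, h, hg0, hh0, hsteps, hPn, hIn, hsat', -⟩ :=
    saturate φ (fun l _ => RealB M V l)
      (fun l E _ hp l' E' hs => by
        obtain ⟨l'', E'', hs', hr⟩ := real_step hM hV hp hs
        exact ⟨l'', E'', hs', hr⟩)
      (SCIForm.size φ + SCIForm.size φ ^ 2 + 1)
      [Node.lf w φ] ∅ (inv_init φ w) hinit (by rw [cnt_init]; omega)
  exact ⟨n, g, h, hg0, hh0, hsteps, real_bot_notmem hPn, hsat'⟩

/-- a supply of fresh labels -/
def fl (l : List Node) (b : Bool) (i : ℕ) : Label := (b, lbound l + i)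

lemma fl_fresh (l : List Node) (b : Bool) (i : ℕ) : freshL (fl l b i) l :=
  fresh_of_ge (by simp [fl]) b

lemma fl_fst (l : List Node) (b : Bool) (i : ℕ) : (fl l b i).1 = b := rfl

lemma fl_ne (l : List Node) {b b' : Bool} {i j : ℕ} (h : i ≠ j) :
    fl l b i ≠ fl l b' j := by
  intro hc
  have := congrArg Prod.snd hc
  simp [fl] at this
  omega

/-! helper cases for open_step -/

lemma impP_case {l : List Node} {E : Set (Label × SCIForm)} {w : Label} {χ θ : SCIForm}
    (hP : ¬ClosedTabUB l E) (hbot : Node.bot ∉ l)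
    (hb : Node.bot ∉ l) (hw : posL w) (hlf : Node.lf w (SCIForm.imp χ θ) ∈ l)
    (hE : (w, SCIForm.imp χ θ) ∉ E) (hUrf : IsUrfather w (SCIForm.imp χ θ) l) :
    ∃ l'' E'', ExtendUB l E l'' E'' ∧ ¬ClosedTabUB l'' E'' ∧ Node.bot ∉ l'' := by
  by_cases h1 : ClosedTabUB
      (l ++ [Node.lf (fl l false 0) χ, Node.lf (fl l false 1) θ]) (insert (w, SCIForm.imp χ θ) E)
  · by_cases h2 : ClosedTabUB
        (l ++ [Node.lf (fl l false 2) χ, Node.lf (fl l true 3) θ]) (insert (w, SCIForm.imp χ θ) E)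
    · by_cases h3 : ClosedTabUB
          (l ++ [Node.lf (fl l true 4) χ, Node.lf (fl l true 5) θ]) (insert (w, SCIForm.imp χ θ) E)
      · exact absurd (ClosedTabUB.impP l E w χ θ (fl l false 0) (fl l false 1)
          (fl l false 2) (fl l true 3) (fl l true 4) (fl l true 5)
          hw hlf hE hUrf rfl rfl (fl_ne l (by omega)) (fl_fresh l false 0) (fl_fresh l false 1)
          rfl rfl (fl_ne l (by omega)) (fl_fresh l false 2) (fl_fresh l true 3)
          rfl rfl (fl_ne l (by omega)) (fl_fresh l true 4) (fl_fresh l true 5)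
          h1 h2 h3) hP
      · exact ⟨_, _, ExtendUB.impP3 l E w (fl l true 4) (fl l true 5) χ θ hb hw hlf hE hUrf
          rfl rfl (fl_ne l (by omega)) (fl_fresh l true 4) (fl_fresh l true 5), h3,
          by simp [hbot]⟩
    · exact ⟨_, _, ExtendUB.impP2 l E w (fl l false 2) (fl l true 3) χ θ hb hw hlf hE hUrf
        rfl rfl (fl_ne l (by omega)) (fl_fresh l false 2) (fl_fresh l true 3), h2,
        by simp [hbot]⟩
  · exact ⟨_, _, ExtendUB.impP1 l E w (fl l false 0) (fl l false 1) χ θ hb hw hlf hE hUrf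
      rfl rfl (fl_ne l (by omega)) (fl_fresh l false 0) (fl_fresh l false 1), h1,
      by simp [hbot]⟩

lemma idnP_case {l : List Node} {E : Set (Label × SCIForm)} {w : Label} {χ θ : SCIForm}
    (hP : ¬ClosedTabUB l E) (hbot : Node.bot ∉ l)
    (hb : Node.bot ∉ l) (hw : posL w) (hlf : Node.lf w (SCIForm.idn χ θ) ∈ l)
    (hE : (w, SCIForm.idn χ θ) ∉ E) (hUrf : IsUrfather w (SCIForm.idn χ θ) l) :
    ∃ l'' E'', ExtendUB l E l'' E'' ∧ ¬ClosedTabUB l'' E'' ∧ Node.bot ∉ l'' := by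
  by_cases h1 : ClosedTabUB
      (l ++ [Node.lf (fl l true 0) χ, Node.lf (fl l true 1) θ,
        Node.eq (fl l true 0) (fl l true 1)]) (insert (w, SCIForm.idn χ θ) E)
  · by_cases h2 : ClosedTabUB
        (l ++ [Node.lf (fl l false 2) χ, Node.lf (fl l false 3) θ,
          Node.eq (fl l false 2) (fl l false 3)]) (insert (w, SCIForm.idn χ θ) E)
    · exact absurd (ClosedTabUB.idnP l E w χ θ (fl l true 0) (fl l true 1)
        (fl l false 2) (fl l false 3)
        hw hlf hE hUrf rfl rfl (fl_ne l (by omega)) (fl_fresh l true 0) (fl_fresh l true 1)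
        rfl rfl (fl_ne l (by omega)) (fl_fresh l false 2) (fl_fresh l false 3)
        h1 h2) hP
    · exact ⟨_, _, ExtendUB.idnP2 l E w (fl l false 2) (fl l false 3) χ θ hb hw hlf hE hUrf
        rfl rfl (fl_ne l (by omega)) (fl_fresh l false 2) (fl_fresh l false 3), h2,
        by simp [hbot]⟩
  · exact ⟨_, _, ExtendUB.idnP1 l E w (fl l true 0) (fl l true 1) χ θ hb hw hlf hE hUrf
      rfl rfl (fl_ne l (by omega)) (fl_fresh l true 0) (fl_fresh l true 1), h1,
      by simp [hbot]⟩

lemma idnN_case {l : List Node} {E : Set (Label × SCIForm)} {w : Label} {χ θ : SCIForm}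
    (hP : ¬ClosedTabUB l E) (hbot : Node.bot ∉ l)
    (hb : Node.bot ∉ l) (hw : negL w) (hlf : Node.lf w (SCIForm.idn χ θ) ∈ l)
    (hE : (w, SCIForm.idn χ θ) ∉ E) (hUrf : IsUrfather w (SCIForm.idn χ θ) l) :
    ∃ l'' E'', ExtendUB l E l'' E'' ∧ ¬ClosedTabUB l'' E'' ∧ Node.bot ∉ l'' := by
  by_cases h1 : ClosedTabUB
      (l ++ [Node.lf (fl l true 0) χ, Node.lf (fl l true 1) θ,
        Node.neq (fl l true 0) (fl l true 1)]) (insert (w, SCIForm.idn χ θ) E)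
  · by_cases h2 : ClosedTabUB
        (l ++ [Node.lf (fl l true 2) χ, Node.lf (fl l false 3) θ]) (insert (w, SCIForm.idn χ θ) E)
    · by_cases h3 : ClosedTabUB
          (l ++ [Node.lf (fl l false 4) χ, Node.lf (fl l true 5) θ]) (insert (w, SCIForm.idn χ θ) E)
      · by_cases h4 : ClosedTabUB
            (l ++ [Node.lf (fl l false 6) χ, Node.lf (fl l false 7) θ,
              Node.neq (fl l false 6) (fl l false 7)]) (insert (w, SCIForm.idn χ θ) E)
        · exact absurd (ClosedTabUB.idnN l E w χ θ (fl l true 0) (fl l true 1)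
            (fl l true 2) (fl l false 3) (fl l false 4) (fl l true 5)
            (fl l false 6) (fl l false 7)
            hw hlf hE hUrf rfl rfl (fl_ne l (by omega)) (fl_fresh l true 0) (fl_fresh l true 1)
            rfl rfl (fl_ne l (by omega)) (fl_fresh l true 2) (fl_fresh l false 3)
            rfl rfl (fl_ne l (by omega)) (fl_fresh l false 4) (fl_fresh l true 5)
            rfl rfl (fl_ne l (by omega)) (fl_fresh l false 6) (fl_fresh l false 7)
            h1 h2 h3 h4) hP
        · exact ⟨_, _, ExtendUB.idnN4 l E w (fl l false 6) (fl l false 7) χ θ hb hw hlf hE hUrf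
            rfl rfl (fl_ne l (by omega)) (fl_fresh l false 6) (fl_fresh l false 7), h4,
            by simp [hbot]⟩
      · exact ⟨_, _, ExtendUB.idnN3 l E w (fl l false 4) (fl l true 5) χ θ hb hw hlf hE hUrf
          rfl rfl (fl_ne l (by omega)) (fl_fresh l false 4) (fl_fresh l true 5), h3,
          by simp [hbot]⟩
    · exact ⟨_, _, ExtendUB.idnN2 l E w (fl l true 2) (fl l false 3) χ θ hb hw hlf hE hUrf
        rfl rfl (fl_ne l (by omega)) (fl_fresh l true 2) (fl_fresh l false 3), h2,
        by simp [hbot]⟩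
  · exact ⟨_, _, ExtendUB.idnN1 l E w (fl l true 0) (fl l true 1) χ θ hb hw hlf hE hUrf
      rfl rfl (fl_ne l (by omega)) (fl_fresh l true 0) (fl_fresh l true 1), h1,
      by simp [hbot]⟩

lemma open_step {l : List Node} {E : Set (Label × SCIForm)} {l' : List Node}
    {E' : Set (Label × SCIForm)}
    (hP : ¬ClosedTabUB l E) (hbot : Node.bot ∉ l) (h : ExtendUB l E l' E') :
    ∃ l'' E'', ExtendUB l E l'' E'' ∧ ¬ClosedTabUB l'' E'' ∧ Node.bot ∉ l'' := by
  cases h with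
  | negP w v χ hb hw hlf hE hUrf hv hfr =>
      exact ⟨_, _, ExtendUB.negP l E w v χ hb hw hlf hE hUrf hv hfr,
        fun hc => hP (ClosedTabUB.negP l E w v χ hw hlf hE hUrf hv hfr hc),
        by simp [hbot]⟩
  | negN w v χ hb hw hlf hE hUrf hv hfr =>
      exact ⟨_, _, ExtendUB.negN l E w v χ hb hw hlf hE hUrf hv hfr,
        fun hc => hP (ClosedTabUB.negN l E w v χ hw hlf hE hUrf hv hfr hc),
        by simp [hbot]⟩
  | impP1 w v u χ θ hb hw hlf hE hUrf hv hu hvu hfv hfu => exact impP_case hP hbot hb hw hlf hE hUrf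
  | impP2 w v u χ θ hb hw hlf hE hUrf hv hu hvu hfv hfu => exact impP_case hP hbot hb hw hlf hE hUrf
  | impP3 w v u χ θ hb hw hlf hE hUrf hv hu hvu hfv hfu => exact impP_case hP hbot hb hw hlf hE hUrf
  | impN w v u χ θ hb hw hlf hE hUrf hv hu hvu hfv hfu =>
      exact ⟨_, _, ExtendUB.impN l E w v u χ θ hb hw hlf hE hUrf hv hu hvu hfv hfu,
        fun hc => hP (ClosedTabUB.impN l E w v u χ θ hw hlf hE hUrf hv hu hvu hfv hfu hc),
        by simp [hbot]⟩
  | idnP1 w v u χ θ hb hw hlf hE hUrf hv hu hvu hfv hfu => exact idnP_case hP hbot hb hw hlf hE hUrf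
  | idnP2 w v u χ θ hb hw hlf hE hUrf hv hu hvu hfv hfu => exact idnP_case hP hbot hb hw hlf hE hUrf
  | idnN1 w v u χ θ hb hw hlf hE hUrf hv hu hvu hfv hfu => exact idnN_case hP hbot hb hw hlf hE hUrf
  | idnN2 w v u χ θ hb hw hlf hE hUrf hv hu hvu hfv hfu => exact idnN_case hP hbot hb hw hlf hE hUrf
  | idnN3 w v u χ θ hb hw hlf hE hUrf hv hu hvu hfv hfu => exact idnN_case hP hbot hb hw hlf hE hUrf
  | idnN4 w v u χ θ hb hw hlf hE hUrf hv hu hvu hfv hfu => exact idnN_case hP hbot hb hw hlf hE hUrf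
  | eqNeg w v u y χ θ hb h1 h2 h3 h4 h5 h6 =>
      exact ⟨_, _, ExtendUB.eqNeg l E w v u y χ θ hb h1 h2 h3 h4 h5 h6,
        fun hc => hP (ClosedTabUB.eqNeg l E w v u y χ θ h1 h2 h3 h4 h5 h6 hc),
        by simp [hbot]⟩
  | eqImp w v w' v' x z χ θ χ' θ' hb h1 h2 h3 h4 h5 h6 h7 h8 h9 =>
      exact ⟨_, _, ExtendUB.eqImp l E w v w' v' x z χ θ χ' θ' hb h1 h2 h3 h4 h5 h6 h7 h8 h9,
        fun hc => hP (ClosedTabUB.eqImp l E w v w' v' x z χ θ χ' θ' h1 h2 h3 h4 h5 h6 h7 h8 h9 hc),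
        by simp [hbot]⟩
  | eqIdn w v w' v' x z χ θ χ' θ' hb h1 h2 h3 h4 h5 h6 h7 h8 h9 =>
      exact ⟨_, _, ExtendUB.eqIdn l E w v w' v' x z χ θ χ' θ' hb h1 h2 h3 h4 h5 h6 h7 h8 h9,
        fun hc => hP (ClosedTabUB.eqIdn l E w v w' v' x z χ θ χ' θ' h1 h2 h3 h4 h5 h6 h7 h8 h9 hc),
        by simp [hbot]⟩
  | ruleF w v χ hb h1 h2 h3 =>
      exact ⟨_, _, ExtendUB.ruleF l E w v χ hb h1 h2 h3,
        fun hc => hP (ClosedTabUB.ruleF l E w v χ h1 h2 h3 hc), by simp [hbot]⟩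
  | ruleSym w v hb h1 h2 =>
      exact ⟨_, _, ExtendUB.ruleSym l E w v hb h1 h2,
        fun hc => hP (ClosedTabUB.ruleSym l E w v h1 h2 hc), by simp [hbot]⟩
  | ruleTran w v u hb h1 h2 h3 =>
      exact ⟨_, _, ExtendUB.ruleTran l E w v u hb h1 h2 h3,
        fun hc => hP (ClosedTabUB.ruleTran l E w v u h1 h2 h3 hc), by simp [hbot]⟩
  | bot1 w v hb h1 h2 => exact absurd (ClosedTabUB.clos1 l E w v h1 h2) hP
  | bot2 w v hb hw hv h1 => exact absurd (ClosedTabUB.clos2 l E w v hw hv h1) hP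
/-! ### Section I: canonical model from a saturated open branch -/

/-- labels carrying a formula on `S` -/
abbrev FLt (S : List Node) : Type := {w : Label // ∃ ψ, Node.lf w ψ ∈ S}

/-- base relation: an equality expression on the branch -/
def lrel (S : List Node) : FLt S → FLt S → Prop := fun a b => Node.eq a.1 b.1 ∈ S

instance brSetoid (S : List Node) : Setoid (FLt S) :=
  ⟨Relation.EqvGen (lrel S), Relation.EqvGen.is_equivalence _⟩

/-- quotient of formula-labels by branch equality -/
abbrev Qt (S : List Node) : Type := Quotient (brSetoid S)

/-- carrier of the canonical model -/
abbrev Ut (S : List Node) : Type := Qt S ⊕ Bool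

/-- designated elements -/
def DQ (S : List Node) : Set (Ut S) :=
  {x | match x with
       | Sum.inl q => ∃ a : FLt S, (⟦a⟧ : Qt S) = q ∧ a.1.1 = true
       | Sum.inr b => b = true}

structure NegWit (S : List Node) (x : Ut S) : Type where
  b : FLt S
  u : FLt S
  χ : SCIForm
  hx : Sum.inl (⟦b⟧ : Qt S) = x
  hbf : Node.lf b.1 χ ∈ S
  huf : Node.lf u.1 (SCIForm.not χ) ∈ S

structure ImpWit (S : List Node) (x y : Ut S) : Type where
  b : FLt S
  c : FLt S
  z : FLt S
  χ : SCIForm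
  θ : SCIForm
  hx : Sum.inl (⟦b⟧ : Qt S) = x
  hy : Sum.inl (⟦c⟧ : Qt S) = y
  hbf : Node.lf b.1 χ ∈ S
  hcf : Node.lf c.1 θ ∈ S
  hzf : Node.lf z.1 (SCIForm.imp χ θ) ∈ S

structure IdnWit (S : List Node) (x y : Ut S) : Type where
  b : FLt S
  c : FLt S
  z : FLt S
  χ : SCIForm
  θ : SCIForm
  hx : Sum.inl (⟦b⟧ : Qt S) = x
  hy : Sum.inl (⟦c⟧ : Qt S) = y
  hbf : Node.lf b.1 χ ∈ S
  hcf : Node.lf c.1 θ ∈ S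
  hzf : Node.lf z.1 (SCIForm.idn χ θ) ∈ S

open Classical in
noncomputable def negOp (S : List Node) : Ut S → Ut S := fun x =>
  if h : Nonempty (NegWit S x) then Sum.inl ⟦(Classical.choice h).u⟧
  else if x ∈ DQ S then Sum.inr false else Sum.inr true

open Classical in
noncomputable def impOp (S : List Node) : Ut S → Ut S → Ut S := fun x y =>
  if h : Nonempty (ImpWit S x y) then Sum.inl ⟦(Classical.choice h).z⟧
  else if x ∉ DQ S ∨ y ∈ DQ S then Sum.inr true else Sum.inr false

open Classical in
noncomputable def idnOp (S : List Node) : Ut S → Ut S → Ut S := fun x y =>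
  if h : Nonempty (IdnWit S x y) then Sum.inl ⟦(Classical.choice h).z⟧
  else if x = y then Sum.inr true else Sum.inr false

/-- the canonical structure -/
noncomputable def MS (S : List Node) : SCIStruct (Ut S) :=
  ⟨DQ S, negOp S, impOp S, idnOp S⟩

open Classical in
/-- the canonical valuation -/
noncomputable def Vv (S : List Node) : SCIForm → Ut S
  | SCIForm.atom n =>
      if h : ∃ a : FLt S, Node.lf a.1 (SCIForm.atom n) ∈ S
      then Sum.inl ⟦Classical.choose h⟧ else Sum.inr true
  | SCIForm.not ψ => negOp S (Vv S ψ)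
  | SCIForm.imp ψ χ => impOp S (Vv S ψ) (Vv S χ)
  | SCIForm.idn ψ χ => idnOp S (Vv S ψ) (Vv S χ)

lemma Vv_isValuation (S : List Node) : IsValuation (MS S) (Vv S) :=
  ⟨fun _ => rfl, fun _ _ => rfl, fun _ _ => rfl⟩
section SatFacts

variable {φ₀ : SCIForm} {S : List Node} {E : Set (Label × SCIForm)}

/-- rules are saturated on `S` -/
def SatB (S : List Node) (E : Set (Label × SCIForm)) : Prop :=
  ∀ l' E', ¬ ExtendUB S E l' E'

lemma F_ref (hbot : Node.bot ∉ S) (hSat : SatB S E) {w : Label} {ψ : SCIForm}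
    (h : Node.lf w ψ ∈ S) : Node.eq w w ∈ S := by
  by_contra hc
  exact hSat _ _ (ExtendUB.ruleF S E w w ψ hbot h h hc)

lemma F_F (hbot : Node.bot ∉ S) (hSat : SatB S E) {w v : Label} {ψ : SCIForm}
    (h : Node.lf w ψ ∈ S) (h' : Node.lf v ψ ∈ S) : Node.eq w v ∈ S := by
  by_contra hc
  exact hSat _ _ (ExtendUB.ruleF S E w v ψ hbot h h' hc)

lemma F_sym (hbot : Node.bot ∉ S) (hSat : SatB S E) {w v : Label}
    (h : Node.eq w v ∈ S) : Node.eq v w ∈ S := by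
  by_contra hc
  exact hSat _ _ (ExtendUB.ruleSym S E w v hbot h hc)

lemma F_tran (hbot : Node.bot ∉ S) (hSat : SatB S E) {w v u : Label}
    (h : Node.eq w v ∈ S) (h' : Node.eq v u ∈ S) : Node.eq w u ∈ S := by
  by_contra hc
  exact hSat _ _ (ExtendUB.ruleTran S E w v u hbot h h' hc)

lemma F_eqNeg (hbot : Node.bot ∉ S) (hSat : SatB S E) {w v u y : Label} {ψ χ : SCIForm}
    (h1 : Node.lf w ψ ∈ S) (h2 : Node.lf v χ ∈ S) (h3 : Node.eq w v ∈ S)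
    (h4 : Node.lf u (SCIForm.not ψ) ∈ S) (h5 : Node.lf y (SCIForm.not χ) ∈ S) :
    Node.eq u y ∈ S := by
  by_contra hc
  exact hSat _ _ (ExtendUB.eqNeg S E w v u y ψ χ hbot h1 h2 h3 h4 h5 hc)

lemma F_eqImp (hbot : Node.bot ∉ S) (hSat : SatB S E) {w v w' v' x z : Label}
    {ψ χ θ ι : SCIForm}
    (h1 : Node.lf w ψ ∈ S) (h2 : Node.lf v χ ∈ S) (h3 : Node.eq w v ∈ S)
    (h4 : Node.lf w' θ ∈ S) (h5 : Node.lf v' ι ∈ S) (h6 : Node.eq w' v' ∈ S)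
    (h7 : Node.lf x (SCIForm.imp ψ θ) ∈ S) (h8 : Node.lf z (SCIForm.imp χ ι) ∈ S) :
    Node.eq x z ∈ S := by
  by_contra hc
  exact hSat _ _ (ExtendUB.eqImp S E w v w' v' x z ψ χ θ ι hbot h1 h2 h3 h4 h5 h6 h7 h8 hc)

lemma F_eqIdn (hbot : Node.bot ∉ S) (hSat : SatB S E) {w v w' v' x z : Label}
    {ψ χ θ ι : SCIForm}
    (h1 : Node.lf w ψ ∈ S) (h2 : Node.lf v χ ∈ S) (h3 : Node.eq w v ∈ S)
    (h4 : Node.lf w' θ ∈ S) (h5 : Node.lf v' ι ∈ S) (h6 : Node.eq w' v' ∈ S)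
    (h7 : Node.lf x (SCIForm.idn ψ θ) ∈ S) (h8 : Node.lf z (SCIForm.idn χ ι) ∈ S) :
    Node.eq x z ∈ S := by
  by_contra hc
  exact hSat _ _ (ExtendUB.eqIdn S E w v w' v' x z ψ χ θ ι hbot h1 h2 h3 h4 h5 h6 h7 h8 hc)

lemma F_o1 (hbot : Node.bot ∉ S) (hSat : SatB S E) {w v : Label}
    (h : Node.eq w v ∈ S) (h' : Node.neq w v ∈ S) : False :=
  hSat _ _ (ExtendUB.bot1 S E w v hbot h h')

lemma F_o2 (hbot : Node.bot ∉ S) (hSat : SatB S E) {w v : Label}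
    (hw : w.1 = true) (hv : v.1 = false) (h : Node.eq w v ∈ S) : False :=
  hSat _ _ (ExtendUB.bot2 S E w v hbot hw hv h)

lemma L_pol (hbot : Node.bot ∉ S) (hSat : SatB S E) {w v : Label}
    (h : Node.eq w v ∈ S) : w.1 = v.1 := by
  rcases Bool.eq_false_or_eq_true w.1 with hw | hw <;>
    rcases Bool.eq_false_or_eq_true v.1 with hv | hv <;>
    first
      | exact absurd h (fun h => F_o2 hbot hSat hw hv h)
      | exact absurd h (fun h => F_o2 hbot hSat hv hw (F_sym hbot hSat h))
      | rw [hw, hv]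

lemma rel_iff (hbot : Node.bot ∉ S) (hSat : SatB S E) (a b : FLt S) :
    (⟦a⟧ : Qt S) = ⟦b⟧ ↔ Node.eq a.1 b.1 ∈ S := by
  rw [Quotient.eq]
  constructor
  · intro h
    induction h with
    | rel x y h => exact h
    | refl x => obtain ⟨ψ, hψ⟩ := x.2; exact F_ref hbot hSat hψ
    | symm x y h ih => exact F_sym hbot hSat ih
    | trans x y z h1 h2 ih1 ih2 => exact F_tran hbot hSat ih1 ih2
  · exact fun h => show Relation.EqvGen (lrel S) a b from Relation.EqvGen.rel a b h

lemma L_D (hbot : Node.bot ∉ S) (hSat : SatB S E) (a : FLt S) :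
    (Sum.inl ⟦a⟧ ∈ DQ S) ↔ a.1.1 = true := by
  constructor
  · rintro ⟨b, hb, hbp⟩
    have := (rel_iff hbot hSat b a).1 hb
    rw [← L_pol hbot hSat this]
    exact hbp
  · intro h
    exact ⟨a, rfl, h⟩

/-- every compound labelled formula on a saturated branch has been decomposed -/
lemma L_dec (hBI : BInv φ₀ S E) (hbot : Node.bot ∉ S) (hSat : SatB S E)
    {u : Label} {ψ : SCIForm} (h : Node.lf u ψ ∈ S) (hna : ar ψ ≠ 0) :
    ∃ u₀ : Label, Node.lf u₀ ψ ∈ S ∧ Node.eq u u₀ ∈ S ∧ WitP u₀ ψ S := by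
  obtain ⟨u₀, hUrf⟩ := urfather_exists h
  have hu₀ : Node.lf u₀ ψ ∈ S := urfather_mem hUrf
  have hEmem : (u₀, ψ) ∈ E := by
    by_contra hc
    rcases Bool.eq_false_or_eq_true u₀.1 with hp | hp
    · cases ψ with
      | atom n => simp [ar] at hna
      | not χ =>
          exact hSat _ _ (ExtendUB.negP S E u₀ (fl S false 0) χ hbot hp hu₀ hc hUrf
            rfl (fl_fresh S false 0))
      | imp χ θ =>
          exact hSat _ _ (ExtendUB.impP1 S E u₀ (fl S false 0) (fl S false 1) χ θ hbot hp hu₀ hc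
            hUrf rfl rfl (fl_ne S (by omega)) (fl_fresh S false 0) (fl_fresh S false 1))
      | idn χ θ =>
          exact hSat _ _ (ExtendUB.idnP1 S E u₀ (fl S true 0) (fl S true 1) χ θ hbot hp hu₀ hc
            hUrf rfl rfl (fl_ne S (by omega)) (fl_fresh S true 0) (fl_fresh S true 1))
    · cases ψ with
      | atom n => simp [ar] at hna
      | not χ =>
          exact hSat _ _ (ExtendUB.negN S E u₀ (fl S true 0) χ hbot hp hu₀ hc hUrf
            rfl (fl_fresh S true 0))
      | imp χ θ =>
          exact hSat _ _ (ExtendUB.impN S E u₀ (fl S true 0) (fl S false 1) χ θ hbot hp hu₀ hc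
            hUrf rfl rfl (fl_ne S (by omega)) (fl_fresh S true 0) (fl_fresh S false 1))
      | idn χ θ =>
          exact hSat _ _ (ExtendUB.idnN2 S E u₀ (fl S true 0) (fl S false 1) χ θ hbot hp hu₀ hc
            hUrf rfl rfl (fl_ne S (by omega)) (fl_fresh S true 0) (fl_fresh S false 1))
  exact ⟨u₀, hu₀, F_F hbot hSat h hu₀, hBI.2.2.2.2 u₀ ψ hEmem⟩

lemma L_not (hBI : BInv φ₀ S E) (hbot : Node.bot ∉ S) (hSat : SatB S E)
    {u : Label} {χ : SCIForm} (h : Node.lf u (SCIForm.not χ) ∈ S) :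
    ∃ v, Node.lf v χ ∈ S ∧ v.1 = !u.1 := by
  obtain ⟨u₀, hu₀, heq, hwit⟩ := L_dec hBI hbot hSat h (by simp [ar])
  obtain ⟨v, hv, hp⟩ := hwit
  exact ⟨v, hv, by rw [hp, L_pol hbot hSat heq]⟩

lemma L_imp (hBI : BInv φ₀ S E) (hbot : Node.bot ∉ S) (hSat : SatB S E)
    {u : Label} {χ θ : SCIForm} (h : Node.lf u (SCIForm.imp χ θ) ∈ S) :
    ∃ v x, Node.lf v χ ∈ S ∧ Node.lf x θ ∈ S ∧
      (if u.1 then (!v.1 || x.1) = true else (v.1 && !x.1) = true) := by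
  obtain ⟨u₀, hu₀, heq, hwit⟩ := L_dec hBI hbot hSat h (by simp [ar])
  obtain ⟨v, x, hv, hx, hp⟩ := hwit
  exact ⟨v, x, hv, hx, by rw [L_pol hbot hSat heq]; exact hp⟩

lemma L_idn (hBI : BInv φ₀ S E) (hbot : Node.bot ∉ S) (hSat : SatB S E)
    {u : Label} {χ θ : SCIForm} (h : Node.lf u (SCIForm.idn χ θ) ∈ S) :
    ∃ v x, Node.lf v χ ∈ S ∧ Node.lf x θ ∈ S ∧
      (if u.1 then Node.eq v x ∈ S else (Node.neq v x ∈ S ∨ v.1 ≠ x.1)) := by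
  obtain ⟨u₀, hu₀, heq, hwit⟩ := L_dec hBI hbot hSat h (by simp [ar])
  obtain ⟨v, x, hv, hx, hp⟩ := hwit
  exact ⟨v, x, hv, hx, by rw [L_pol hbot hSat heq]; exact hp⟩

lemma L_class_ne (hbot : Node.bot ∉ S) (hSat : SatB S E) {v x : Label}
    (h : Node.neq v x ∈ S ∨ v.1 ≠ x.1) : Node.eq v x ∉ S := by
  intro hc
  rcases h with h | h
  · exact F_o1 hbot hSat hc h
  · exact h (L_pol hbot hSat hc)

end SatFacts
section ModelLaws

variable {φ₀ : SCIForm} {S : List Node} {E : Set (Label × SCIForm)}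

lemma D_inr {b : Bool} : (Sum.inr b ∈ DQ S) ↔ b = true := Iff.rfl

lemma M_neg (hBI : BInv φ₀ S E) (hbot : Node.bot ∉ S) (hSat : SatB S E) (x : Ut S) :
    negOp S x ∈ DQ S ↔ x ∉ DQ S := by
  unfold negOp
  by_cases h : Nonempty (NegWit S x)
  · rw [dif_pos h]
    generalize Classical.choice h = W
    obtain ⟨b, u, χ, hx, hbf, huf⟩ := W
    subst hx
    obtain ⟨v, hv, hvp⟩ := L_not hBI hbot hSat huf
    have hbv : Node.eq b.1 v ∈ S := F_F hbot hSat hbf hv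
    have hpol : b.1.1 = v.1 := L_pol hbot hSat hbv
    show Sum.inl ⟦u⟧ ∈ DQ S ↔ _
    rw [L_D hbot hSat u, L_D hbot hSat b, hpol, hvp]
    cases hu : u.1.1 <;> simp
  · rw [dif_neg h]
    by_cases hx : x ∈ DQ S
    · rw [if_pos hx]
      exact iff_of_false (fun hc => Bool.false_ne_true (D_inr.1 hc)) (not_not_intro hx)
    · rw [if_neg hx]
      exact iff_of_true (D_inr.2 rfl) hx

lemma M_imp (hBI : BInv φ₀ S E) (hbot : Node.bot ∉ S) (hSat : SatB S E) (x y : Ut S) :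
    impOp S x y ∈ DQ S ↔ (x ∉ DQ S ∨ y ∈ DQ S) := by
  unfold impOp
  by_cases h : Nonempty (ImpWit S x y)
  · rw [dif_pos h]
    generalize Classical.choice h = W
    obtain ⟨b, c, z, χ, θ, hx, hy, hbf, hcf, hzf⟩ := W
    subst hx; subst hy
    obtain ⟨v, xw, hv, hxw, hcond⟩ := L_imp hBI hbot hSat hzf
    have hp1 : b.1.1 = v.1 := L_pol hbot hSat (F_F hbot hSat hbf hv)
    have hp2 : c.1.1 = xw.1 := L_pol hbot hSat (F_F hbot hSat hcf hxw)
    show Sum.inl ⟦z⟧ ∈ DQ S ↔ _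
    rw [L_D hbot hSat z, L_D hbot hSat b, L_D hbot hSat c, hp1, hp2]
    rcases Bool.eq_false_or_eq_true z.1.1 with hz | hz <;> rw [hz] at hcond ⊢
    · simp only [if_pos] at hcond
      rcases Bool.eq_false_or_eq_true v.1 with h1 | h1 <;>
        rcases Bool.eq_false_or_eq_true xw.1 with h2 | h2 <;>
        rw [h1, h2] at hcond ⊢ <;> simp_all
    · simp only [Bool.false_eq_true, if_false] at hcond
      rcases Bool.eq_false_or_eq_true v.1 with h1 | h1 <;>
        rcases Bool.eq_false_or_eq_true xw.1 with h2 | h2 <;>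
        rw [h1, h2] at hcond ⊢ <;> simp_all
  · rw [dif_neg h]
    by_cases hc : x ∉ DQ S ∨ y ∈ DQ S
    · rw [if_pos hc]
      exact iff_of_true (D_inr.2 rfl) hc
    · rw [if_neg hc]
      exact iff_of_false (fun hc' => Bool.false_ne_true (D_inr.1 hc')) hc

lemma M_idn (hBI : BInv φ₀ S E) (hbot : Node.bot ∉ S) (hSat : SatB S E) (x y : Ut S) :
    idnOp S x y ∈ DQ S ↔ x = y := by
  unfold idnOp
  by_cases h : Nonempty (IdnWit S x y)
  · rw [dif_pos h]
    generalize Classical.choice h = W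
    obtain ⟨b, c, z, χ, θ, hx, hy, hbf, hcf, hzf⟩ := W
    subst hx; subst hy
    obtain ⟨v, xw, hv, hxw, hcond⟩ := L_idn hBI hbot hSat hzf
    have keq1 : Node.eq b.1 v ∈ S := F_F hbot hSat hbf hv
    have keq2 : Node.eq xw c.1 ∈ S := F_F hbot hSat hxw hcf
    show Sum.inl ⟦z⟧ ∈ DQ S ↔ _
    rw [L_D hbot hSat z]
    have hinj : (Sum.inl (⟦b⟧ : Qt S) : Ut S) = Sum.inl ⟦c⟧ ↔
        Node.eq b.1 c.1 ∈ S := by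
      rw [← rel_iff hbot hSat]
      exact ⟨fun hh => Sum.inl.inj hh, fun hh => by rw [hh]⟩
    rw [hinj]
    rcases Bool.eq_false_or_eq_true z.1.1 with hz | hz <;> rw [hz] at hcond ⊢
    · simp only [if_pos] at hcond
      constructor
      · intro _
        exact F_tran hbot hSat (F_tran hbot hSat keq1 hcond) keq2
      · intro _; rfl
    · simp only [Bool.false_eq_true, if_false] at hcond
      constructor
      · intro hh; cases hh
      · intro hh
        exfalso
        have : Node.eq v xw ∈ S :=
          F_tran hbot hSat (F_tran hbot hSat (F_sym hbot hSat keq1) hh)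
            (F_sym hbot hSat keq2)
        exact L_class_ne hbot hSat hcond this
  · rw [dif_neg h]
    by_cases hc : x = y
    · rw [if_pos hc]
      exact iff_of_true (D_inr.2 rfl) hc
    · rw [if_neg hc]
      exact iff_of_false (fun hc' => Bool.false_ne_true (D_inr.1 hc')) hc

lemma M_model (hBI : BInv φ₀ S E) (hbot : Node.bot ∉ S) (hSat : SatB S E) :
    IsSCIModel (MS S) := by
  refine ⟨⟨Sum.inr true⟩, ?_, M_neg hBI hbot hSat, M_imp hBI hbot hSat,
    M_idn hBI hbot hSat⟩
  intro hU
  have : (Sum.inr false : Ut S) ∈ DQ S := by rw [show DQ S = (MS S).D from rfl, hU]; trivial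
  exact Bool.false_ne_true (D_inr.1 this)

lemma TL (hBI : BInv φ₀ S E) (hbot : Node.bot ∉ S) (hSat : SatB S E) :
    ∀ (ψ : SCIForm) (a : Label) (h : Node.lf a ψ ∈ S),
      Vv S ψ = Sum.inl ⟦(⟨a, ψ, h⟩ : FLt S)⟧ := by
  intro ψ
  induction ψ with
  | atom n =>
      intro a h
      have hex : ∃ b : FLt S, Node.lf b.1 (SCIForm.atom n) ∈ S := ⟨⟨a, _, h⟩, h⟩
      rw [Vv, dif_pos hex]
      congr 1
      exact (rel_iff hbot hSat _ _).2 (F_F hbot hSat (Classical.choose_spec hex) h)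
  | not χ ih =>
      intro a h
      obtain ⟨v, hv, hvp⟩ := L_not hBI hbot hSat h
      have hVχ : Vv S χ = Sum.inl ⟦(⟨v, χ, hv⟩ : FLt S)⟧ := ih v hv
      show negOp S (Vv S χ) = _
      rw [hVχ]
      have hw : Nonempty (NegWit S (Sum.inl ⟦(⟨v, χ, hv⟩ : FLt S)⟧)) :=
        ⟨⟨⟨v, χ, hv⟩, ⟨a, _, h⟩, χ, rfl, hv, h⟩⟩
      rw [negOp, dif_pos hw]
      set W := Classical.choice hw
      have hbv : Node.eq W.b.1 v ∈ S :=
        (rel_iff hbot hSat _ _).1 (Sum.inl.inj W.hx)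
      congr 1
      exact (rel_iff hbot hSat _ _).2 (F_eqNeg hbot hSat W.hbf hv hbv W.huf h)
  | imp χ θ ih1 ih2 =>
      intro a h
      obtain ⟨v, xw, hv, hxw, -⟩ := L_imp hBI hbot hSat h
      have hVχ := ih1 v hv
      have hVθ := ih2 xw hxw
      show impOp S (Vv S χ) (Vv S θ) = _
      rw [hVχ, hVθ]
      have hw : Nonempty (ImpWit S (Sum.inl ⟦(⟨v, χ, hv⟩ : FLt S)⟧)
          (Sum.inl ⟦(⟨xw, θ, hxw⟩ : FLt S)⟧)) :=
        ⟨⟨⟨v, χ, hv⟩, ⟨xw, θ, hxw⟩, ⟨a, _, h⟩, χ, θ, rfl, rfl, hv, hxw, h⟩⟩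
      rw [impOp, dif_pos hw]
      set W := Classical.choice hw
      have hbv : Node.eq W.b.1 v ∈ S :=
        (rel_iff hbot hSat _ _).1 (Sum.inl.inj W.hx)
      have hcx : Node.eq W.c.1 xw ∈ S :=
        (rel_iff hbot hSat _ _).1 (Sum.inl.inj W.hy)
      congr 1
      exact (rel_iff hbot hSat _ _).2
        (F_eqImp hbot hSat W.hbf hv hbv W.hcf hxw hcx W.hzf h)
  | idn χ θ ih1 ih2 =>
      intro a h
      obtain ⟨v, xw, hv, hxw, -⟩ := L_idn hBI hbot hSat h
      have hVχ := ih1 v hv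
      have hVθ := ih2 xw hxw
      show idnOp S (Vv S χ) (Vv S θ) = _
      rw [hVχ, hVθ]
      have hw : Nonempty (IdnWit S (Sum.inl ⟦(⟨v, χ, hv⟩ : FLt S)⟧)
          (Sum.inl ⟦(⟨xw, θ, hxw⟩ : FLt S)⟧)) :=
        ⟨⟨⟨v, χ, hv⟩, ⟨xw, θ, hxw⟩, ⟨a, _, h⟩, χ, θ, rfl, rfl, hv, hxw, h⟩⟩
      rw [idnOp, dif_pos hw]
      set W := Classical.choice hw
      have hbv : Node.eq W.b.1 v ∈ S :=
        (rel_iff hbot hSat _ _).1 (Sum.inl.inj W.hx)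
      have hcx : Node.eq W.c.1 xw ∈ S :=
        (rel_iff hbot hSat _ _).1 (Sum.inl.inj W.hy)
      congr 1
      exact (rel_iff hbot hSat _ _).2
        (F_eqIdn hbot hSat W.hbf hv hbv W.hcf hxw hcx W.hzf h)

end ModelLaws

/-- Part (ii): completeness. -/
lemma part2 (φ : SCIForm) (hval : SCIValid φ) (w : Label) (hw : negL w) :
    ClosedTabUB [Node.lf w φ] ∅ := by
  by_contra hC
  obtain ⟨n, g, h, hg0, hh0, hsteps, hPn, hIn, hsat', t, ht⟩ :=
    saturate φ (fun l E => ¬ClosedTabUB l E ∧ Node.bot ∉ l)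
      (fun l E _ hp l' E' hs => by
        obtain ⟨l'', E'', hs', ho, hb⟩ := open_step hp.1 hp.2 hs
        exact ⟨l'', E'', hs', ho, hb⟩)
      (SCIForm.size φ + SCIForm.size φ ^ 2 + 1) [Node.lf w φ] ∅ (inv_init φ w)
      ⟨hC, by simp⟩ (by rw [cnt_init]; omega)
  obtain ⟨hopen, hbot⟩ := hPn
  have hSat : SatB (g n) (h n) := hsat'
  have hmem : Node.lf w φ ∈ g n := by rw [ht]; exact List.mem_append_left _ (by simp)
  have hM := M_model hIn hbot hSat
  have hD := hval (Ut (g n)) (MS (g n)) (Vv (g n)) hM (Vv_isValuation (g n))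
  rw [TL hIn hbot hSat φ w hmem] at hD
  have := (L_D hbot hSat _).1 hD
  rw [negL_eq hw] at this
  exact Bool.false_ne_true this
/-- TC_SCI+(UB) is sound, complete, and terminating:
(i) if φ is SCI-satisfiable then there is an open, fully expanded
TC_SCI+(UB)-tableau with w⁺ : φ at the root (a branch developed from the root
by TC_SCI+(UB) rule applications on which ⊥ does not occur and to which no rule
is applicable);
(ii) if φ is SCI-valid then φ has a TC_SCI+(UB)-tableau proof;
(iii) on any branch of a TC_SCI+(UB)-tableau for φ, rules are applied at most
|φ| + |φ|² + 1 times. -/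
theorem stmt_17 :
    (∀ φ : SCIForm, SCISatisfiable φ → ∀ w : Label, posL w →
      ∃ (n : ℕ) (g : ℕ → List Node) (h : ℕ → Set (Label × SCIForm)),
        g 0 = [Node.lf w φ] ∧ h 0 = ∅ ∧
        (∀ i < n, ExtendUB (g i) (h i) (g (i + 1)) (h (i + 1))) ∧
        Node.bot ∉ g n ∧ (∀ l' E', ¬ ExtendUB (g n) (h n) l' E')) ∧
    (∀ φ : SCIForm, SCIValid φ → ∀ w : Label, negL w →
      ClosedTabUB [Node.lf w φ] ∅) ∧
    (∀ (φ : SCIForm) (w : Label) (n : ℕ)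
        (g : ℕ → List Node) (h : ℕ → Set (Label × SCIForm)),
        g 0 = [Node.lf w φ] → h 0 = ∅ →
        (∀ i < n, ExtendUB (g i) (h i) (g (i + 1)) (h (i + 1))) →
        n ≤ SCIForm.size φ + SCIForm.size φ ^ 2 + 1) :=
  ⟨part1, part2, part3⟩
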